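/- arXiv:1501.05929 — 2 statements merged into one kernel-verified Lean document; each statement's English description precedes it below -/
import Mathlib

section
/- For the product test function on a wreath product: let φ₁ on H₁ with support U₁ and φ₂ on H₂ be finitely supported functions, and define φ(η,x) = (∏_{y∈U₁} φ₂(η(y)))·φ₁(x)·1_W(η) on H₂ ≀ H₁ where W is the set of finitely supported configurations η: H₁ → H₂ with support in U₁. Then ‖φ‖_p^p = ‖φ₁‖_p^p · ‖φ₂‖_p^{p|U₁|}, the support of φ has size at most |U₁|·|support(φ₂)|^{|U₁|}, and E_{p,μ}(φ)/‖φ‖_p^p = (1/2)·(E_{p,μ₁}(φ₁)/‖φ₁‖_p^p + E_{p,μ₂}(φ₂)/‖φ₂‖_p^p) for μ = (1/2)(μ₁+μ₂). -/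
open scoped BigOperators

/-- A symmetric probability measure on a group. -/
def IsSymProb {G : Type*} [Group G] (φ : G → ℝ) : Prop :=
  (∀ x, 0 ≤ φ x) ∧ (∑' x, φ x) = 1 ∧ ∀ x, φ x⁻¹ = φ x

/-- The `L^p` isoperimetric profile. -/
noncomputable def lambdaP {G : Type*} [Group G] (p : ℝ) (φ : G → ℝ) (v : ℝ) : ℝ :=
  sInf {E : ℝ | ∃ f : G → ℝ, (Function.support f).Finite ∧
    ((Function.support f).ncard : ℝ) ≤ v ∧ (∑' x, |f x| ^ p) = 1 ∧
    E = (1 / 2) * ∑' x : G, ∑' y : G, |f (x * y) - f x| ^ p * φ y}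

/-- Right-continuous inverse of an isoperimetric profile. -/
noncomputable def invProfile (Λ : ℝ → ℝ) (s : ℝ) : ℝ :=
  sInf {v : ℝ | 0 ≤ v ∧ Λ v ≤ s}

section Wreath

variable (H₁ H₂ : Type*) [Group H₁] [Group H₂]

/-- The group of finitely supported configurations `⊕_{h ∈ H₁} H₂`, as a subgroup
of the full product. -/
def Lamp : Subgroup (H₁ → H₂) where
  carrier := {f | (Function.mulSupport f).Finite}
  one_mem' := by
    refine Set.Finite.subset Set.finite_empty ?_
    intro x hx
    exact absurd rfl hx
  mul_mem' := by
    intro a b ha hb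
    exact (Set.Finite.union ha hb).subset (Function.mulSupport_mul a b)
  inv_mem' := by
    intro a ha
    refine Set.Finite.subset ha ?_
    intro x hx
    simp only [Function.mem_mulSupport] at hx ⊢
    intro h
    exact hx (by simp [h])

/-- Translation of configurations: `(shiftFn h f) x = f (h⁻¹ x)`. -/
def shiftFn (h : H₁) (f : H₁ → H₂) : H₁ → H₂ := fun x => f (h⁻¹ * x)

theorem shiftFn_mem (h : H₁) {f : H₁ → H₂} (hf : f ∈ Lamp H₁ H₂) :
    shiftFn H₁ H₂ h f ∈ Lamp H₁ H₂ := by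
  have hf' : (Function.mulSupport f).Finite := hf
  have hsub : Function.mulSupport (shiftFn H₁ H₂ h f) ⊆
      (fun x => h * x) '' Function.mulSupport f := by
    intro x hx
    exact ⟨h⁻¹ * x, hx, by simp⟩
  exact (hf'.image _).subset hsub

/-- The translation automorphism of the lamp group. -/
noncomputable def shiftEquiv (h : H₁) : Lamp H₁ H₂ ≃* Lamp H₁ H₂ where
  toFun f := ⟨shiftFn H₁ H₂ h f, shiftFn_mem H₁ H₂ h f.2⟩
  invFun f := ⟨shiftFn H₁ H₂ h⁻¹ f, shiftFn_mem H₁ H₂ h⁻¹ f.2⟩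
  left_inv f := Subtype.ext (funext fun x => by simp [shiftFn])
  right_inv f := Subtype.ext (funext fun x => by simp [shiftFn])
  map_mul' f g := rfl

/-- The action of the base `H₁` on the lamp group by translations. -/
noncomputable def wact : H₁ →* MulAut (Lamp H₁ H₂) where
  toFun h := shiftEquiv H₁ H₂ h
  map_one' := by
    apply MulEquiv.ext
    intro f
    exact Subtype.ext (funext fun x => by simp [shiftEquiv, shiftFn])
  map_mul' := by
    intro a b
    apply MulEquiv.ext
    intro f
    exact Subtype.ext (funext fun x => by
      simp [shiftEquiv, shiftFn, MulAut.mul_apply, mul_assoc]; rfl)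

/-- The wreath product `H₂ ≀ H₁ = (⊕_{H₁} H₂) ⋊ H₁`. -/
abbrev WPr := Lamp H₁ H₂ ⋊[wact H₁ H₂] H₁

open Classical in
/-- The lamp configuration equal to `k` at the identity and trivial elsewhere. -/
noncomputable def lampAtFn (k : H₂) : H₁ → H₂ := fun y => if y = (1 : H₁) then k else 1

theorem lampAtFn_mem (k : H₂) : lampAtFn H₁ H₂ k ∈ Lamp H₁ H₂ := by
  have hsub : Function.mulSupport (lampAtFn H₁ H₂ k) ⊆ {(1 : H₁)} := by
    intro x hx
    by_contra hc
    apply hx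
    simp only [lampAtFn]
    rw [if_neg (by simpa using hc)]
  exact (Set.finite_singleton _).subset hsub

/-- Pushforward of a measure under an embedding. -/
noncomputable def pushMeasure {K W : Type*} (emb : K → W) (μ : K → ℝ) : W → ℝ :=
  fun g => ∑' k : K, Set.indicator {k' : K | emb k' = g} μ k

/-- The measure `μ = (1/2)(μ₁ + μ₂)` on `H₂ ≀ H₁`, with `μ₁` supported on the base
copy of `H₁` and `μ₂` on the lamp copy of `H₂` over the identity. -/
noncomputable def wrMeasure (μ₁ : H₁ → ℝ) (μ₂ : H₂ → ℝ) : WPr H₁ H₂ → ℝ :=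
  fun g => (1 / 2) *
    (pushMeasure (fun x : H₁ => (SemidirectProduct.inr x : WPr H₁ H₂)) μ₁ g +
     pushMeasure (fun k : H₂ =>
       (SemidirectProduct.inl ⟨lampAtFn H₁ H₂ k, lampAtFn_mem H₁ H₂ k⟩ : WPr H₁ H₂)) μ₂ g)

end Wreath

/-- `‖f‖_p^p = Σ_x |f x|^p`. -/
noncomputable def normP {G : Type*} [Group G] (p : ℝ) (f : G → ℝ) : ℝ :=
  ∑' x : G, |f x| ^ p

/-- The `p`-Dirichlet energy `E_{p,μ}(f) = (1/2) Σ_{x,y} |f(xy) - f(x)|^p μ(y)`. -/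
noncomputable def energyP {G : Type*} [Group G] (p : ℝ) (μ : G → ℝ) (f : G → ℝ) : ℝ :=
  (1 / 2) * ∑' x : G, ∑' y : G, |f (x * y) - f x| ^ p * μ y

open Classical in
/-- The product test function
`φ(η, x) = (∏_{y ∈ U₁} φ₂(η y)) · φ₁(x) · 1_W(η)` on `H₂ ≀ H₁`, where `W` is the
set of lamp configurations supported in `U₁`. -/
noncomputable def testFn (H₁ H₂ : Type*) [Group H₁] [Group H₂]
    (U₁ : Finset H₁) (φ₁ : H₁ → ℝ) (φ₂ : H₂ → ℝ) : WPr H₁ H₂ → ℝ :=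
  fun g => (∏ y ∈ U₁, φ₂ ((g.left : H₁ → H₂) y)) * φ₁ g.right *
    (if ∀ y : H₁, y ∉ U₁ → (g.left : H₁ → H₂) y = 1 then 1 else 0)

section AuxWreath

open Classical

lemma rpow_abs_nonneg (p x : ℝ) : 0 ≤ |x| ^ p := Real.rpow_nonneg (abs_nonneg x) p

lemma abs_mul_rpow (p x y : ℝ) : |x * y| ^ p = |x| ^ p * |y| ^ p := by
  rw [abs_mul, Real.mul_rpow (abs_nonneg x) (abs_nonneg y)]

lemma abs_zero_rpow {p : ℝ} (hp : p ≠ 0) : |(0:ℝ)| ^ p = 0 := by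
  rw [abs_zero, Real.zero_rpow hp]

lemma abs_sub_rpow_le {p : ℝ} (hp : 1 ≤ p) (x y : ℝ) :
    |x - y| ^ p ≤ 2 ^ p * (|x| ^ p + |y| ^ p) := by
  have hp0 : (0:ℝ) ≤ p := by linarith
  have h2 : |x - y| ≤ 2 * max |x| |y| := by
    have := abs_sub x y
    rcases le_total |x| |y| with h | h
    · rw [max_eq_right h]; nlinarith [abs_nonneg x]
    · rw [max_eq_left h]; nlinarith [abs_nonneg y]
  have hm : (0:ℝ) ≤ max |x| |y| := le_max_of_le_left (abs_nonneg x)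
  calc |x - y| ^ p ≤ (2 * max |x| |y|) ^ p :=
        Real.rpow_le_rpow (abs_nonneg _) h2 hp0
    _ = 2 ^ p * (max |x| |y|) ^ p := Real.mul_rpow (by norm_num) hm
    _ ≤ 2 ^ p * (|x| ^ p + |y| ^ p) := by
        have : (max |x| |y|) ^ p ≤ |x| ^ p + |y| ^ p := by
          rcases max_cases |x| |y| with ⟨he, _⟩ | ⟨he, _⟩ <;> rw [he]
          · exact le_add_of_nonneg_right (rpow_abs_nonneg p y)
          · exact le_add_of_nonneg_left (rpow_abs_nonneg p x)
        have h2p : (0:ℝ) ≤ 2 ^ p := Real.rpow_nonneg (by norm_num) p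
        nlinarith
  
lemma IsSymProb.summable' {G : Type} [Group G] {μ : G → ℝ} (h : IsSymProb μ) :
    Summable μ := by
  by_contra hs
  have h0 := tsum_eq_zero_of_not_summable hs
  rw [h.2.1] at h0
  norm_num at h0

/-- Key tsum factorization for products with finitely supported first factor. -/
lemma tsum_prod_mul {α β : Type} {F : α → ℝ} {G : β → ℝ} {T : Finset α}
    (hT : ∀ f ∉ T, F f = 0) (hFnn : ∀ f, 0 ≤ F f)
    (hG : Summable G) (hGnn : ∀ y, 0 ≤ G y) :
    ∑' q : α × β, F q.1 * G q.2 = (∑ f ∈ T, F f) * ∑' y, G y := by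
  have hFs : Summable F := summable_of_ne_finset_zero hT
  have hs : Summable (fun q : α × β => F q.1 * G q.2) :=
    Summable.mul_of_nonneg hFs hG hFnn hGnn
  rw [Summable.tsum_prod' hs (fun f => hG.mul_left (F f))]
  calc ∑' (f : α), ∑' (y : β), F f * G y = ∑' (f : α), F f * ∑' y, G y := by
        congr 1; funext f; exact tsum_mul_left
    _ = (∑' f, F f) * ∑' y, G y := tsum_mul_right
    _ = (∑ f ∈ T, F f) * ∑' y, G y := by rw [tsum_eq_sum hT]

lemma sum_piFinset_prod {ι κ : Type} [Fintype ι] [DecidableEq ι] (S : Finset κ) (h : κ → ℝ) :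
    ∑ f ∈ Fintype.piFinset (fun _ : ι => S), ∏ i, h (f i) = (∑ c ∈ S, h c) ^ (Fintype.card ι) := by
  rw [← Finset.prod_univ_sum (fun _ : ι => S) (fun _ c => h c), Finset.prod_const,
    Finset.card_univ]

end AuxWreath
section AuxWreath2

open Classical
set_option linter.unusedSectionVars false

variable {H₁ H₂ : Type} [Group H₁] [Group H₂]

/-- Extension of a function on `U₁` by `1`. -/
noncomputable def extU (U₁ : Finset H₁) (f : ↥U₁ → H₂) : H₁ → H₂ :=
  fun y => if h : y ∈ U₁ then f ⟨y, h⟩ else 1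

lemma extU_mem (U₁ : Finset H₁) (f : ↥U₁ → H₂) : extU U₁ f ∈ Lamp H₁ H₂ := by
  have : Function.mulSupport (extU U₁ f) ⊆ (U₁ : Set H₁) := by
    intro y hy
    by_contra hc
    exact hy (dif_neg (by simpa using hc))
  exact (U₁.finite_toSet).subset this

lemma extU_apply_mem (U₁ : Finset H₁) (f : ↥U₁ → H₂) {y : H₁} (h : y ∈ U₁) :
    extU U₁ f y = f ⟨y, h⟩ := dif_pos h

lemma extU_apply_not_mem (U₁ : Finset H₁) (f : ↥U₁ → H₂) {y : H₁} (h : y ∉ U₁) :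
    extU U₁ f y = 1 := dif_neg h

/-- The parametrization of wreath-product elements whose configuration is
supported in `U₁`. -/
noncomputable def jmap (U₁ : Finset H₁) (q : (↥U₁ → H₂) × H₁) : WPr H₁ H₂ :=
  ⟨⟨extU U₁ q.1, extU_mem U₁ q.1⟩, q.2⟩

lemma jmap_inj (U₁ : Finset H₁) : Function.Injective (jmap (H₂ := H₂) U₁) := by
  rintro ⟨f, x⟩ ⟨f', x'⟩ h
  have h1 : extU U₁ f = extU U₁ f' := congrArg (fun g : WPr H₁ H₂ => (g.left : H₁ → H₂)) h
  have h2 : x = x' := congrArg (fun g : WPr H₁ H₂ => g.right) h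
  have : f = f' := by
    funext y
    have := congrFun h1 y.1
    rwa [extU_apply_mem U₁ f y.2, extU_apply_mem U₁ f' y.2] at this
  simp [this, h2]

lemma jmap_restrict (U₁ : Finset H₁) {g : WPr H₁ H₂}
    (h : ∀ y : H₁, y ∉ U₁ → (g.left : H₁ → H₂) y = 1) :
    jmap U₁ (fun y : ↥U₁ => (g.left : H₁ → H₂) y.1, g.right) = g := by
  have : extU U₁ (fun y : ↥U₁ => (g.left : H₁ → H₂) y.1) = (g.left : H₁ → H₂) := by
    funext y
    by_cases hy : y ∈ U₁
    · rw [extU_apply_mem U₁ _ hy]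
    · rw [extU_apply_not_mem U₁ _ hy, h y hy]
  show (⟨⟨_, _⟩, _⟩ : WPr H₁ H₂) = g
  cases g with
  | mk l r => exact SemidirectProduct.ext (Subtype.ext this) rfl

lemma mem_range_jmap (U₁ : Finset H₁) {g : WPr H₁ H₂}
    (h : ∀ y : H₁, y ∉ U₁ → (g.left : H₁ → H₂) y = 1) : g ∈ Set.range (jmap U₁) :=
  ⟨_, jmap_restrict U₁ h⟩

lemma testFn_jmap (U₁ : Finset H₁) (φ₁ : H₁ → ℝ) (φ₂ : H₂ → ℝ) (f : ↥U₁ → H₂) (x : H₁) :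
    testFn H₁ H₂ U₁ φ₁ φ₂ (jmap U₁ (f, x)) = (∏ y : ↥U₁, φ₂ (f y)) * φ₁ x := by
  unfold testFn jmap
  simp only
  rw [if_pos (fun y hy => extU_apply_not_mem U₁ f hy), mul_one]
  congr 1
  rw [← Finset.prod_coe_sort U₁ (fun y => φ₂ (extU U₁ f y))]
  exact Finset.prod_congr rfl (fun y _ => by rw [extU_apply_mem U₁ f y.2, Subtype.coe_eta])

lemma testFn_eq_zero_of_not_range (U₁ : Finset H₁) (φ₁ : H₁ → ℝ) (φ₂ : H₂ → ℝ)
    {g : WPr H₁ H₂} (h : g ∉ Set.range (jmap U₁)) : testFn H₁ H₂ U₁ φ₁ φ₂ g = 0 := by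
  unfold testFn
  by_cases hc : ∀ y : H₁, y ∉ U₁ → (g.left : H₁ → H₂) y = 1
  · exact absurd (mem_range_jmap U₁ hc) h
  · rw [if_neg hc, mul_zero]

end AuxWreath2
section AuxWreath3

open Classical
set_option linter.unusedSectionVars false

variable {H₁ H₂ : Type} [Group H₁] [Group H₂]

lemma left_mul_inr (g : WPr H₁ H₂) (z : H₁) :
    (g * SemidirectProduct.inr z).left = g.left := by simp

lemma right_mul_inr (g : WPr H₁ H₂) (z : H₁) :
    (g * SemidirectProduct.inr z).right = g.right * z := by simp

noncomputable def lampAt (k : H₂) : Lamp H₁ H₂ := ⟨lampAtFn H₁ H₂ k, lampAtFn_mem H₁ H₂ k⟩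

lemma left_mul_inl (g : WPr H₁ H₂) (k : H₂) :
    ((g * SemidirectProduct.inl (lampAt k)).left : H₁ → H₂) =
      fun y => if y = g.right then (g.left : H₁ → H₂) y * k else (g.left : H₁ → H₂) y := by
  funext y
  show (g.left : H₁ → H₂) y * shiftFn H₁ H₂ g.right (lampAtFn H₁ H₂ k) y = _
  unfold shiftFn lampAtFn
  by_cases hy : y = g.right
  · rw [if_pos hy, if_pos (by rw [hy, inv_mul_cancel])]
  · rw [if_neg hy, if_neg (fun hc => hy (by rwa [inv_mul_eq_one, eq_comm] at hc)), mul_one]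

lemma right_mul_inl (g : WPr H₁ H₂) (k : H₂) :
    (g * SemidirectProduct.inl (lampAt k)).right = g.right := by simp

lemma lampAt_inj : Function.Injective (lampAt (H₁ := H₁) (H₂ := H₂)) := by
  intro k k' h
  have := congrFun (congrArg (fun l : Lamp H₁ H₂ => (l : H₁ → H₂)) h) 1
  simpa [lampAt, lampAtFn] using this

lemma pushMeasure_apply {K W : Type} {emb : K → W} (hemb : Function.Injective emb)
    (μ : K → ℝ) (k : K) : pushMeasure emb μ (emb k) = μ k := by
  unfold pushMeasure
  rw [tsum_eq_sum (s := {k}) (fun k' hk' => Set.indicator_of_notMem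
    (fun hc => hk' (by simp [hemb hc])) μ)]
  rw [Finset.sum_singleton, Set.indicator_of_mem (by simp) μ]

lemma pushMeasure_not_range {K W : Type} {emb : K → W} (μ : K → ℝ) {w : W}
    (h : w ∉ Set.range emb) : pushMeasure emb μ w = 0 := by
  unfold pushMeasure
  have : ∀ k : K, Set.indicator {k' : K | emb k' = w} μ k = 0 := fun k =>
    Set.indicator_of_notMem (s := {k' : K | emb k' = w}) (fun hc => h ⟨k, hc⟩) μ
  simp [this]

end AuxWreath3
section AuxWreath4

open Classical
set_option linter.unusedSectionVars false

variable {H₁ H₂ : Type} [Group H₁] [Group H₂]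

lemma abs_prod_rpow {ι : Type} (s : Finset ι) (f : ι → ℝ) (p : ℝ) :
    |∏ i ∈ s, f i| ^ p = ∏ i ∈ s, |f i| ^ p := by
  rw [Finset.abs_prod, Real.finset_prod_rpow s _ (fun i _ => abs_nonneg (f i)) p]

lemma testFn_support_subset_range {U₁ : Finset H₁} {φ₁ : H₁ → ℝ} {φ₂ : H₂ → ℝ} {p : ℝ}
    (hp0 : p ≠ 0) :
    Function.support (fun g => |testFn H₁ H₂ U₁ φ₁ φ₂ g| ^ p) ⊆
      Set.range (jmap U₁) := by
  intro g hg
  by_contra hc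
  rw [Function.mem_support, testFn_eq_zero_of_not_range U₁ φ₁ φ₂ hc, abs_zero_rpow hp0] at hg
  exact hg rfl

lemma normP_testFn {p : ℝ} (hp : 1 ≤ p)
    (U₁ : Finset H₁) (φ₁ : H₁ → ℝ) (φ₂ : H₂ → ℝ)
    (hsupp₁ : Function.support φ₁ = (U₁ : Set H₁))
    (hsupp₂ : (Function.support φ₂).Finite) :
    normP p (testFn H₁ H₂ U₁ φ₁ φ₂) = normP p φ₁ * normP p φ₂ ^ U₁.card := by
  have hp0 : p ≠ 0 := by positivity
  set S₂ : Finset H₂ := hsupp₂.toFinset with hS₂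
  have hφ₂0 : ∀ c ∉ S₂, |φ₂ c| ^ p = 0 := fun c hc => by
    have : φ₂ c = 0 := by
      by_contra h0
      exact hc (hsupp₂.mem_toFinset.mpr h0)
    rw [this, abs_zero_rpow hp0]
  have hφ₁0 : ∀ x ∉ U₁, |φ₁ x| ^ p = 0 := fun x hx => by
    have : φ₁ x = 0 := by
      by_contra h0
      exact hx (by rw [← Finset.mem_coe, ← hsupp₁]; exact h0)
    rw [this, abs_zero_rpow hp0]
  have key : normP p (testFn H₁ H₂ U₁ φ₁ φ₂) =
      ∑' q : (↥U₁ → H₂) × H₁, |testFn H₁ H₂ U₁ φ₁ φ₂ (jmap U₁ q)| ^ p :=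
    ((jmap_inj U₁).tsum_eq (testFn_support_subset_range hp0)).symm
  rw [key]
  have hval : ∀ q : (↥U₁ → H₂) × H₁, |testFn H₁ H₂ U₁ φ₁ φ₂ (jmap U₁ q)| ^ p =
      (∏ y : ↥U₁, |φ₂ (q.1 y)| ^ p) * |φ₁ q.2| ^ p := by
    rintro ⟨f, x⟩
    rw [testFn_jmap, abs_mul_rpow, abs_prod_rpow]
  rw [tsum_congr hval]
  rw [tsum_prod_mul (F := fun f : ↥U₁ → H₂ => ∏ y : ↥U₁, |φ₂ (f y)| ^ p)
    (G := fun x : H₁ => |φ₁ x| ^ p) (T := Fintype.piFinset (fun _ : ↥U₁ => S₂))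
    (fun f hf => ?_) (fun f => Finset.prod_nonneg (fun y _ => rpow_abs_nonneg p _))
    (summable_of_ne_finset_zero hφ₁0) (fun x => rpow_abs_nonneg p _)]
  · rw [sum_piFinset_prod (ι := ↥U₁) S₂ (fun c => |φ₂ c| ^ p), Fintype.card_coe]
    have h2 : normP p φ₂ = ∑ c ∈ S₂, |φ₂ c| ^ p := tsum_eq_sum hφ₂0
    have h1 : normP p φ₁ = ∑' x, |φ₁ x| ^ p := rfl
    rw [← h2, h1, mul_comm]
  · obtain ⟨y, hy⟩ : ∃ y : ↥U₁, f y ∉ S₂ := by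
      by_contra hall
      push_neg at hall
      exact hf (Fintype.mem_piFinset.mpr hall)
    exact Finset.prod_eq_zero (Finset.mem_univ y) (hφ₂0 _ hy)

lemma support_testFn_subset
    (U₁ : Finset H₁) (φ₁ : H₁ → ℝ) (φ₂ : H₂ → ℝ)
    (hsupp₁ : Function.support φ₁ = (U₁ : Set H₁))
    (hsupp₂ : (Function.support φ₂).Finite) :
    Function.support (testFn H₁ H₂ U₁ φ₁ φ₂) ⊆
      ((((Fintype.piFinset (fun _ : ↥U₁ => hsupp₂.toFinset)) ×ˢ U₁).image (jmap U₁)) :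
        Set (WPr H₁ H₂)) := by
  set S₂ : Finset H₂ := hsupp₂.toFinset with hS₂
  set T : Finset ((↥U₁ → H₂) × H₁) := (Fintype.piFinset (fun _ : ↥U₁ => S₂)) ×ˢ U₁ with hT
  show Function.support (testFn H₁ H₂ U₁ φ₁ φ₂) ⊆ ↑(T.image (jmap U₁))
  intro g hg
  rw [Function.mem_support] at hg
  unfold testFn at hg
  have hind : ∀ y : H₁, y ∉ U₁ → (g.left : H₁ → H₂) y = 1 := by
    by_contra hc
    rw [if_neg hc, mul_zero] at hg
    exact hg rfl
  have hφ₁ : φ₁ g.right ≠ 0 := fun h0 => hg (by rw [h0, mul_zero, zero_mul])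
  have hxU : g.right ∈ U₁ := by
    rw [← Finset.mem_coe, ← hsupp₁]; exact hφ₁
  have hprod : (∏ y ∈ U₁, φ₂ ((g.left : H₁ → H₂) y)) ≠ 0 := fun h0 => by
    rw [h0, zero_mul, zero_mul] at hg; exact hg rfl
  have hvals : ∀ y : ↥U₁, (g.left : H₁ → H₂) y.1 ∈ S₂ := by
    intro y
    rw [hsupp₂.mem_toFinset]
    intro h0
    exact hprod (Finset.prod_eq_zero y.2 h0)
  rw [Finset.coe_image, ← jmap_restrict U₁ hind]
  exact Set.mem_image_of_mem _ (by
    rw [Finset.mem_coe, hT, Finset.mem_product]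
    exact ⟨Fintype.mem_piFinset.mpr hvals, hxU⟩)

lemma testFn_support_finite
    (U₁ : Finset H₁) (φ₁ : H₁ → ℝ) (φ₂ : H₂ → ℝ)
    (hsupp₁ : Function.support φ₁ = (U₁ : Set H₁))
    (hsupp₂ : (Function.support φ₂).Finite) :
    (Function.support (testFn H₁ H₂ U₁ φ₁ φ₂)).Finite :=
  Set.Finite.subset (Finset.finite_toSet _) (support_testFn_subset U₁ φ₁ φ₂ hsupp₁ hsupp₂)

lemma support_testFn_card {p : ℝ} (hp : 1 ≤ p)
    (U₁ : Finset H₁) (φ₁ : H₁ → ℝ) (φ₂ : H₂ → ℝ)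
    (hsupp₁ : Function.support φ₁ = (U₁ : Set H₁))
    (hsupp₂ : (Function.support φ₂).Finite) :
    (Function.support (testFn H₁ H₂ U₁ φ₁ φ₂)).ncard ≤
      U₁.card * (Function.support φ₂).ncard ^ U₁.card := by
  set S₂ : Finset H₂ := hsupp₂.toFinset with hS₂
  set T : Finset ((↥U₁ → H₂) × H₁) := (Fintype.piFinset (fun _ : ↥U₁ => S₂)) ×ˢ U₁ with hT
  have hsub : Function.support (testFn H₁ H₂ U₁ φ₁ φ₂) ⊆ ↑(T.image (jmap U₁)) :=
    support_testFn_subset U₁ φ₁ φ₂ hsupp₁ hsupp₂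
  calc (Function.support (testFn H₁ H₂ U₁ φ₁ φ₂)).ncard
      ≤ (↑(T.image (jmap U₁)) : Set (WPr H₁ H₂)).ncard :=
        Set.ncard_le_ncard hsub (T.image (jmap U₁)).finite_toSet
    _ = (T.image (jmap U₁)).card := Set.ncard_coe_finset _
    _ ≤ T.card := Finset.card_image_le
    _ = (Fintype.piFinset (fun _ : ↥U₁ => S₂)).card * U₁.card := Finset.card_product _ _
    _ = S₂.card ^ U₁.card * U₁.card := by
        rw [Fintype.card_piFinset]
        simp [Fintype.card_coe]
    _ = U₁.card * (Function.support φ₂).ncard ^ U₁.card := by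
        rw [Set.ncard_eq_toFinset_card _ hsupp₂, mul_comm]
  
end AuxWreath4
section AuxWreath5

open Classical
set_option linter.unusedSectionVars false

lemma summable_energy_core {G : Type} [Group G] {p : ℝ} (hp : 1 ≤ p)
    {φ : G → ℝ} (hφ : (Function.support φ).Finite)
    {μ : G → ℝ} (hμ : IsSymProb μ) :
    Summable (fun x : G => ∑' z : G, |φ (x * z) - φ x| ^ p * μ z) := by
  have hp0 : (0:ℝ) ≤ p := by linarith
  set w : G × G → ℝ := fun q => |φ (q.1 * q.2) - φ q.1| ^ p * μ q.2 with hw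
  have hwnn : ∀ q, 0 ≤ w q := fun q => mul_nonneg (rpow_abs_nonneg p _) (hμ.1 _)
  have hφps : Summable (fun x : G => |φ x| ^ p) := by
    refine summable_of_ne_finset_zero (s := hφ.toFinset) (fun x hx => ?_)
    have : φ x = 0 := by
      by_contra h0; exact hx (hφ.mem_toFinset.mpr h0)
    rw [this, abs_zero_rpow (by positivity)]
  have hμs : Summable μ := hμ.summable'
  have hu2 : Summable (fun q : G × G => |φ q.1| ^ p * μ q.2) :=
    Summable.mul_of_nonneg hφps hμs (fun x => rpow_abs_nonneg p _) hμ.1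
  have hu1 : Summable (fun q : G × G => |φ (q.1 * q.2)| ^ p * μ q.2) := by
    set e : G × G ≃ G × G :=
      ⟨fun q => (q.1 * q.2, q.2), fun q => (q.1 * q.2⁻¹, q.2),
        fun q => by simp, fun q => by simp⟩ with he
    have : (fun q : G × G => |φ q.1| ^ p * μ q.2) ∘ e =
        fun q : G × G => |φ (q.1 * q.2)| ^ p * μ q.2 := rfl
    exact this ▸ (e.summable_iff.mpr hu2)
  have husum : Summable (fun q : G × G =>
      2 ^ p * ((|φ (q.1 * q.2)| ^ p * μ q.2) + (|φ q.1| ^ p * μ q.2))) :=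
    ((hu1.add hu2).mul_left _)
  have hws : Summable w := by
    refine Summable.of_nonneg_of_le hwnn (fun q => ?_) husum
    have h1 : |φ (q.1 * q.2) - φ q.1| ^ p ≤ 2 ^ p * (|φ (q.1 * q.2)| ^ p + |φ q.1| ^ p) :=
      abs_sub_rpow_le hp _ _
    have := mul_le_mul_of_nonneg_right h1 (hμ.1 q.2)
    calc w q ≤ 2 ^ p * (|φ (q.1 * q.2)| ^ p + |φ q.1| ^ p) * μ q.2 := this
      _ = 2 ^ p * ((|φ (q.1 * q.2)| ^ p * μ q.2) + (|φ q.1| ^ p * μ q.2)) := by ring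
  exact ((summable_prod_of_nonneg hwnn).mp hws).2

lemma bounded_of_finite_support {α : Type} {f : α → ℝ} (h : (Function.support f).Finite) :
    ∃ M : ℝ, 0 ≤ M ∧ ∀ x, |f x| ≤ M := by
  refine ⟨∑ x ∈ h.toFinset, |f x|, Finset.sum_nonneg (fun x _ => abs_nonneg _), fun x => ?_⟩
  by_cases hx : x ∈ h.toFinset
  · exact Finset.single_le_sum (fun i _ => abs_nonneg (f i)) hx
  · have : f x = 0 := by
      by_contra h0; exact hx (h.mem_toFinset.mpr h0)
    rw [this, abs_zero]
    exact Finset.sum_nonneg (fun i _ => abs_nonneg _)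

lemma tsum_prod_mul' {α β : Type} {F : β → ℝ} {G : α → ℝ} {T : Finset β}
    (hT : ∀ f ∉ T, F f = 0) (hFnn : ∀ f, 0 ≤ F f)
    (hG : Summable G) (hGnn : ∀ y, 0 ≤ G y) :
    ∑' q : α × β, G q.1 * F q.2 = (∑ f ∈ T, F f) * ∑' y, G y := by
  rw [← (Equiv.prodComm β α).tsum_eq (fun q : α × β => G q.1 * F q.2)]
  have : ∀ q : β × α, G ((Equiv.prodComm β α) q).1 * F ((Equiv.prodComm β α) q).2 =
      F q.1 * G q.2 := fun q => mul_comm _ _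
  rw [tsum_congr this]
  exact tsum_prod_mul hT hFnn hG hGnn

lemma tsum_prod_left_finite {α β : Type} {G : α × β → ℝ} {T : Finset α}
    (hnn : ∀ q, 0 ≤ G q) (h0 : ∀ x ∉ T, ∀ y, G (x, y) = 0)
    (hs : ∀ x, Summable fun y => G (x, y)) :
    Summable G ∧ ∑' q : α × β, G q = ∑ x ∈ T, ∑' y, G (x, y) := by
  have hz : ∀ x ∉ T, ∑' y, G (x, y) = 0 := fun x hx => by
    have : (fun y => G (x, y)) = fun _ => (0:ℝ) := funext (h0 x hx)
    rw [this, tsum_zero]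
  have hcol : Summable (fun x => ∑' y, G (x, y)) :=
    summable_of_ne_finset_zero (s := T) hz
  have hG : Summable G := (summable_prod_of_nonneg hnn).mpr ⟨hs, hcol⟩
  exact ⟨hG, by rw [Summable.tsum_prod' hG hs, tsum_eq_sum hz]⟩

lemma prod_erase_eq_subtype {α : Type} [DecidableEq α] {s : Finset α} {x : α} (hx : x ∈ s)
    (w : α → ℝ) :
    ∏ y ∈ s.erase x, w y = ∏ j : {j : ↥s // j ≠ ⟨x, hx⟩}, w j.1.1 := by
  rw [← Finset.prod_coe_sort]
  refine Finset.prod_bij' (i := fun (y : ↥(s.erase x)) _ =>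
      (⟨⟨y.1, Finset.mem_of_mem_erase y.2⟩, fun hc => (Finset.mem_erase.mp y.2).1
        (congrArg Subtype.val hc)⟩ : {j : ↥s // j ≠ ⟨x, hx⟩}))
    (j := fun (j : {j : ↥s // j ≠ ⟨x, hx⟩}) _ =>
      (⟨j.1.1, Finset.mem_erase.mpr ⟨fun hc => j.2 (Subtype.ext hc), j.1.2⟩⟩ : ↥(s.erase x)))
    ?_ ?_ ?_ ?_ ?_ <;> simp

end AuxWreath5
section AuxWreath6

open Classical
set_option linter.unusedSectionVars false

variable {H₁ H₂ : Type} [Group H₁] [Group H₂]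

lemma wr_inner_sum {p : ℝ} (hp : 1 ≤ p) {μ₁ : H₁ → ℝ} {μ₂ : H₂ → ℝ}
    (h₁ : IsSymProb μ₁) (h₂ : IsSymProb μ₂)
    {φ : WPr H₁ H₂ → ℝ} (hφb : ∃ M : ℝ, 0 ≤ M ∧ ∀ w, |φ w| ≤ M) (g : WPr H₁ H₂) :
    ∑' h : WPr H₁ H₂, |φ (g * h) - φ g| ^ p * wrMeasure H₁ H₂ μ₁ μ₂ h =
    (1/2) * ((∑' z : H₁, |φ (g * SemidirectProduct.inr z) - φ g| ^ p * μ₁ z) +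
             (∑' k : H₂, |φ (g * SemidirectProduct.inl (lampAt k)) - φ g| ^ p * μ₂ k)) := by
  have hp0 : (0:ℝ) ≤ p := by linarith
  obtain ⟨M, hM0, hM⟩ := hφb
  set F : WPr H₁ H₂ → ℝ := fun h => |φ (g * h) - φ g| ^ p with hF
  have hFnn : ∀ h, 0 ≤ F h := fun h => rpow_abs_nonneg p _
  set C : ℝ := 2 ^ p * (M ^ p + M ^ p) with hC
  have hFb : ∀ h, F h ≤ C := by
    intro h
    refine le_trans (abs_sub_rpow_le hp _ _) ?_
    have e1 : |φ (g * h)| ^ p ≤ M ^ p := Real.rpow_le_rpow (abs_nonneg _) (hM _) hp0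
    have e2 : |φ g| ^ p ≤ M ^ p := Real.rpow_le_rpow (abs_nonneg _) (hM _) hp0
    have h2p : (0:ℝ) ≤ 2 ^ p := Real.rpow_nonneg (by norm_num) p
    nlinarith
  set emb₁ : H₁ → WPr H₁ H₂ := fun z => SemidirectProduct.inr z with hemb₁
  set emb₂ : H₂ → WPr H₁ H₂ := fun k => SemidirectProduct.inl (lampAt k) with hemb₂
  have hinj₁ : Function.Injective emb₁ := SemidirectProduct.inr_injective
  have hinj₂ : Function.Injective emb₂ :=
    SemidirectProduct.inl_injective.comp lampAt_inj
  set P₁ : WPr H₁ H₂ → ℝ := pushMeasure emb₁ μ₁ with hP₁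
  set P₂ : WPr H₁ H₂ → ℝ := pushMeasure emb₂ μ₂ with hP₂
  have h0₁ : ∀ w ∉ Set.range emb₁, F w * P₁ w = 0 := fun w hw => by
    rw [hP₁, pushMeasure_not_range μ₁ hw, mul_zero]
  have h0₂ : ∀ w ∉ Set.range emb₂, F w * P₂ w = 0 := fun w hw => by
    rw [hP₂, pushMeasure_not_range μ₂ hw, mul_zero]
  have hcomp₁ : ∀ z : H₁, F (emb₁ z) * P₁ (emb₁ z) = F (emb₁ z) * μ₁ z := fun z => by
    rw [hP₁, pushMeasure_apply hinj₁]
  have hcomp₂ : ∀ k : H₂, F (emb₂ k) * P₂ (emb₂ k) = F (emb₂ k) * μ₂ k := fun k => by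
    rw [hP₂, pushMeasure_apply hinj₂]
  have hs₁' : Summable (fun z : H₁ => F (emb₁ z) * μ₁ z) := by
    refine Summable.of_nonneg_of_le (fun z => mul_nonneg (hFnn _) (h₁.1 z))
      (fun z => mul_le_mul_of_nonneg_right (hFb _) (h₁.1 z)) (h₁.summable'.mul_left C)
  have hs₂' : Summable (fun k : H₂ => F (emb₂ k) * μ₂ k) := by
    refine Summable.of_nonneg_of_le (fun k => mul_nonneg (hFnn _) (h₂.1 k))
      (fun k => mul_le_mul_of_nonneg_right (hFb _) (h₂.1 k)) (h₂.summable'.mul_left C)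
  have hs₁ : Summable (fun w => F w * P₁ w) := by
    refine (hinj₁.summable_iff h0₁).mp ?_
    have : (fun w => F w * P₁ w) ∘ emb₁ = fun z => F (emb₁ z) * μ₁ z := funext hcomp₁
    rw [this]; exact hs₁'
  have hs₂ : Summable (fun w => F w * P₂ w) := by
    refine (hinj₂.summable_iff h0₂).mp ?_
    have : (fun w => F w * P₂ w) ∘ emb₂ = fun k => F (emb₂ k) * μ₂ k := funext hcomp₂
    rw [this]; exact hs₂'
  have ht₁ : ∑' w, F w * P₁ w = ∑' z, F (emb₁ z) * μ₁ z := by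
    rw [← hinj₁.tsum_eq (f := fun w => F w * P₁ w) (fun w hw =>
      Classical.byContradiction fun hc => hw (h0₁ w hc))]
    exact tsum_congr hcomp₁
  have ht₂ : ∑' w, F w * P₂ w = ∑' k, F (emb₂ k) * μ₂ k := by
    rw [← hinj₂.tsum_eq (f := fun w => F w * P₂ w) (fun w hw =>
      Classical.byContradiction fun hc => hw (h0₂ w hc))]
    exact tsum_congr hcomp₂
  have hmeas : ∀ h, wrMeasure H₁ H₂ μ₁ μ₂ h = (1/2) * (P₁ h + P₂ h) := fun h => rfl
  calc ∑' h, F h * wrMeasure H₁ H₂ μ₁ μ₂ h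
      = ∑' h, (1/2) * (F h * P₁ h + F h * P₂ h) := by
        refine tsum_congr (fun h => ?_); rw [hmeas h]; ring
    _ = (1/2) * ∑' h, (F h * P₁ h + F h * P₂ h) := tsum_mul_left
    _ = (1/2) * ((∑' w, F w * P₁ w) + ∑' w, F w * P₂ w) := by rw [Summable.tsum_add hs₁ hs₂]
    _ = _ := by rw [ht₁, ht₂]

end AuxWreath6
section AuxWreath7

open Classical
set_option linter.unusedSectionVars false
set_option maxHeartbeats 1000000

variable {H₁ H₂ : Type} [Group H₁] [Group H₂]

lemma prod_extU' (U₁ : Finset H₁) (φ₂ : H₂ → ℝ) (f : ↥U₁ → H₂) :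
    ∏ y ∈ U₁, φ₂ (extU U₁ f y) = ∏ y : ↥U₁, φ₂ (f y) := by
  rw [← Finset.prod_coe_sort U₁ (fun y => φ₂ (extU U₁ f y))]
  exact Finset.prod_congr rfl (fun y _ => by rw [extU_apply_mem U₁ f y.2, Subtype.coe_eta])

lemma tsum_A_full {p : ℝ} (hp : 1 ≤ p) (U₁ : Finset H₁) (φ₁ : H₁ → ℝ) (φ₂ : H₂ → ℝ)
    (hsupp₁ : Function.support φ₁ = (U₁ : Set H₁))
    (hsupp₂ : (Function.support φ₂).Finite)
    {μ₁ : H₁ → ℝ} (h₁ : IsSymProb μ₁) :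
    Summable (fun g : WPr H₁ H₂ => ∑' z : H₁,
        |testFn H₁ H₂ U₁ φ₁ φ₂ (g * SemidirectProduct.inr z) -
          testFn H₁ H₂ U₁ φ₁ φ₂ g| ^ p * μ₁ z) ∧
    ∑' g : WPr H₁ H₂, ∑' z : H₁,
        |testFn H₁ H₂ U₁ φ₁ φ₂ (g * SemidirectProduct.inr z) -
          testFn H₁ H₂ U₁ φ₁ φ₂ g| ^ p * μ₁ z
      = (∑ c ∈ hsupp₂.toFinset, |φ₂ c| ^ p) ^ U₁.card *
        ∑' x : H₁, ∑' z : H₁, |φ₁ (x * z) - φ₁ x| ^ p * μ₁ z := by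
  have hp0 : p ≠ 0 := by positivity
  set a : H₁ → ℝ := fun x => ∑' z : H₁, |φ₁ (x * z) - φ₁ x| ^ p * μ₁ z with ha
  have hsφ₁ : (Function.support φ₁).Finite := hsupp₁ ▸ U₁.finite_toSet
  have hsa : Summable a := summable_energy_core hp hsφ₁ h₁
  have hann : ∀ x, 0 ≤ a x := fun x =>
    tsum_nonneg (fun z => mul_nonneg (rpow_abs_nonneg p _) (h₁.1 z))
  set c : WPr H₁ H₂ → ℝ := fun g => (∏ y ∈ U₁, φ₂ ((g.left : H₁ → H₂) y)) *
    (if ∀ y : H₁, y ∉ U₁ → (g.left : H₁ → H₂) y = 1 then (1:ℝ) else 0) with hc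
  set A : WPr H₁ H₂ → ℝ := fun g => ∑' z : H₁,
    |testFn H₁ H₂ U₁ φ₁ φ₂ (g * SemidirectProduct.inr z) -
      testFn H₁ H₂ U₁ φ₁ φ₂ g| ^ p * μ₁ z with hA
  have hAeval : ∀ g, A g = |c g| ^ p * a g.right := by
    intro g
    have hdiff : ∀ z : H₁,
        testFn H₁ H₂ U₁ φ₁ φ₂ (g * SemidirectProduct.inr z) -
          testFn H₁ H₂ U₁ φ₁ φ₂ g = c g * (φ₁ (g.right * z) - φ₁ g.right) := by
      intro z
      show (∏ y ∈ U₁, φ₂ (((g * SemidirectProduct.inr z).left : H₁ → H₂) y)) *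
          φ₁ ((g * SemidirectProduct.inr z).right) *
          (if ∀ y : H₁, y ∉ U₁ → ((g * SemidirectProduct.inr z).left : H₁ → H₂) y = 1
            then (1:ℝ) else 0) - _ = _
      rw [left_mul_inr, right_mul_inr, hc]
      show _ - (∏ y ∈ U₁, φ₂ ((g.left : H₁ → H₂) y)) * φ₁ g.right * _ = _
      ring
    rw [hA]
    simp only [hdiff]
    calc ∑' z : H₁, |c g * (φ₁ (g.right * z) - φ₁ g.right)| ^ p * μ₁ z
        = ∑' z : H₁, |c g| ^ p * (|φ₁ (g.right * z) - φ₁ g.right| ^ p * μ₁ z) := by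
          refine tsum_congr (fun z => ?_); rw [abs_mul_rpow]; ring
      _ = |c g| ^ p * a g.right := by rw [tsum_mul_left]
  have hsupport : Function.support A ⊆ Set.range (jmap U₁) := by
    intro g hg
    rw [Function.mem_support, hAeval] at hg
    by_contra hcr
    have hind : ¬ ∀ y : H₁, y ∉ U₁ → (g.left : H₁ → H₂) y = 1 :=
      fun hi => hcr (mem_range_jmap U₁ hi)
    apply hg
    rw [hc]
    simp only [if_neg hind, mul_zero, abs_zero_rpow hp0, zero_mul]
  have hjm : ∀ q : (↥U₁ → H₂) × H₁,
      A (jmap U₁ q) = (∏ y : ↥U₁, |φ₂ (q.1 y)| ^ p) * a q.2 := by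
    rintro ⟨f, x⟩
    rw [hAeval]
    have h1 : c (jmap U₁ (f, x)) = ∏ y : ↥U₁, φ₂ (f y) := by
      rw [hc]
      show (∏ y ∈ U₁, φ₂ (extU U₁ f y)) *
        (if ∀ y : H₁, y ∉ U₁ → extU U₁ f y = 1 then (1:ℝ) else 0) = _
      rw [if_pos (fun y hy => extU_apply_not_mem U₁ f hy), mul_one, prod_extU']
    rw [h1, abs_prod_rpow]
    rfl
  have hFzero : ∀ f : ↥U₁ → H₂, f ∉ Fintype.piFinset (fun _ : ↥U₁ => hsupp₂.toFinset) →
      (∏ y : ↥U₁, |φ₂ (f y)| ^ p) = 0 := by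
    intro f hf
    obtain ⟨y, hy⟩ : ∃ y : ↥U₁, f y ∉ hsupp₂.toFinset := by
      by_contra hall
      push_neg at hall
      exact hf (Fintype.mem_piFinset.mpr hall)
    refine Finset.prod_eq_zero (Finset.mem_univ y) ?_
    have : φ₂ (f y) = 0 := by
      by_contra h0; exact hy (hsupp₂.mem_toFinset.mpr h0)
    rw [this, abs_zero_rpow hp0]
  have hsA : Summable A := by
    refine ((jmap_inj U₁).summable_iff (fun w hw => ?_)).mp ?_
    · exact Classical.byContradiction fun hcne => hw (hsupport hcne)
    · have : A ∘ jmap U₁ = fun q : (↥U₁ → H₂) × H₁ =>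
          (∏ y : ↥U₁, |φ₂ (q.1 y)| ^ p) * a q.2 := funext hjm
      rw [this]
      exact Summable.mul_of_nonneg (f := fun f : ↥U₁ → H₂ => ∏ y : ↥U₁, |φ₂ (f y)| ^ p)
        (g := a) (summable_of_ne_finset_zero hFzero) hsa
        (fun f => Finset.prod_nonneg (fun y _ => rpow_abs_nonneg p _)) hann
  refine ⟨hsA, ?_⟩
  rw [← (jmap_inj U₁).tsum_eq hsupport]
  rw [tsum_congr hjm]
  rw [tsum_prod_mul (F := fun f : ↥U₁ → H₂ => ∏ y : ↥U₁, |φ₂ (f y)| ^ p) (G := a)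
    (T := Fintype.piFinset (fun _ : ↥U₁ => hsupp₂.toFinset)) hFzero
    (fun f => Finset.prod_nonneg (fun y _ => rpow_abs_nonneg p _)) hsa hann]
  rw [sum_piFinset_prod (ι := ↥U₁) hsupp₂.toFinset (fun cc => |φ₂ cc| ^ p), Fintype.card_coe]

end AuxWreath7
section AuxWreath8

open Classical
set_option linter.unusedSectionVars false
set_option maxHeartbeats 1000000

variable {H₁ H₂ : Type} [Group H₁] [Group H₂]

lemma testFn_diff_inl (U₁ : Finset H₁) (φ₁ : H₁ → ℝ) (φ₂ : H₂ → ℝ)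
    (hsupp₁ : Function.support φ₁ = (U₁ : Set H₁)) (g : WPr H₁ H₂) (k : H₂) :
    testFn H₁ H₂ U₁ φ₁ φ₂ (g * SemidirectProduct.inl (lampAt k)) -
      testFn H₁ H₂ U₁ φ₁ φ₂ g =
    ((∏ y ∈ U₁.erase g.right, φ₂ ((g.left : H₁ → H₂) y)) * φ₁ g.right *
      (if ∀ y : H₁, y ∉ U₁ → (g.left : H₁ → H₂) y = 1 then (1:ℝ) else 0)) *
      (φ₂ ((g.left : H₁ → H₂) g.right * k) - φ₂ ((g.left : H₁ → H₂) g.right)) := by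
  set x := g.right with hx
  set η : H₁ → H₂ := (g.left : H₁ → H₂) with hη
  have hleft : ((g * SemidirectProduct.inl (lampAt k)).left : H₁ → H₂) =
      fun y => if y = x then η y * k else η y := left_mul_inl g k
  have hright : (g * SemidirectProduct.inl (lampAt k)).right = x := right_mul_inl g k
  have hexp : testFn H₁ H₂ U₁ φ₁ φ₂ (g * SemidirectProduct.inl (lampAt k)) =
      (∏ y ∈ U₁, φ₂ (if y = x then η y * k else η y)) * φ₁ x *
      (if ∀ y : H₁, y ∉ U₁ → (if y = x then η y * k else η y) = 1 then (1:ℝ) else 0) := by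
    unfold testFn
    rw [hleft, hright]
  have hexp0 : testFn H₁ H₂ U₁ φ₁ φ₂ g =
      (∏ y ∈ U₁, φ₂ (η y)) * φ₁ x *
      (if ∀ y : H₁, y ∉ U₁ → η y = 1 then (1:ℝ) else 0) := rfl
  by_cases hxU : x ∈ U₁
  · by_cases hind : ∀ y : H₁, y ∉ U₁ → η y = 1
    · have hind' : ∀ y : H₁, y ∉ U₁ → (if y = x then η y * k else η y) = 1 := by
        intro y hy
        rw [if_neg (fun hc => hy (by rw [hc]; exact hxU)), hind y hy]
      rw [hexp, hexp0, if_pos hind, if_pos hind']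
      have hsplit1 : ∏ y ∈ U₁, φ₂ (if y = x then η y * k else η y) =
          φ₂ (η x * k) * ∏ y ∈ U₁.erase x, φ₂ (η y) := by
        rw [← Finset.mul_prod_erase U₁ _ hxU, if_pos rfl]
        congr 1
        exact Finset.prod_congr rfl (fun y hy => by
          rw [if_neg (Finset.mem_erase.mp hy).1])
      have hsplit2 : ∏ y ∈ U₁, φ₂ (η y) = φ₂ (η x) * ∏ y ∈ U₁.erase x, φ₂ (η y) :=
        (Finset.mul_prod_erase U₁ _ hxU).symm
      rw [hsplit1, hsplit2]
      ring
    · have hind' : ¬ ∀ y : H₁, y ∉ U₁ → (if y = x then η y * k else η y) = 1 := by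
        intro hall
        apply hind
        intro y hy
        have := hall y hy
        rwa [if_neg (fun hc => hy (by rw [hc]; exact hxU))] at this
      rw [hexp, hexp0, if_neg hind, if_neg hind']
      ring
  · have hφ₁x : φ₁ x = 0 := by
      by_contra h0
      exact hxU (by rw [← Finset.mem_coe, ← hsupp₁]; exact h0)
    rw [hexp, hexp0, hφ₁x]
    ring

lemma tsum_B_full {p : ℝ} (hp : 1 ≤ p) (U₁ : Finset H₁) (φ₁ : H₁ → ℝ) (φ₂ : H₂ → ℝ)
    (hsupp₁ : Function.support φ₁ = (U₁ : Set H₁))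
    (hsupp₂ : (Function.support φ₂).Finite)
    {μ₂ : H₂ → ℝ} (h₂ : IsSymProb μ₂) :
    Summable (fun g : WPr H₁ H₂ => ∑' k : H₂,
        |testFn H₁ H₂ U₁ φ₁ φ₂ (g * SemidirectProduct.inl (lampAt k)) -
          testFn H₁ H₂ U₁ φ₁ φ₂ g| ^ p * μ₂ k) ∧
    ∑' g : WPr H₁ H₂, ∑' k : H₂,
        |testFn H₁ H₂ U₁ φ₁ φ₂ (g * SemidirectProduct.inl (lampAt k)) -
          testFn H₁ H₂ U₁ φ₁ φ₂ g| ^ p * μ₂ k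
      = ((∑ x ∈ U₁, |φ₁ x| ^ p) * (∑ c ∈ hsupp₂.toFinset, |φ₂ c| ^ p) ^ (U₁.card - 1)) *
        ∑' aH : H₂, ∑' k : H₂, |φ₂ (aH * k) - φ₂ aH| ^ p * μ₂ k := by
  have hp0 : p ≠ 0 := by positivity
  set S₂ : Finset H₂ := hsupp₂.toFinset with hS₂
  have hφ₂0 : ∀ c ∉ S₂, |φ₂ c| ^ p = 0 := fun c hc => by
    have : φ₂ c = 0 := by
      by_contra h0; exact hc (hsupp₂.mem_toFinset.mpr h0)
    rw [this, abs_zero_rpow hp0]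
  set b : H₂ → ℝ := fun aH => ∑' k : H₂, |φ₂ (aH * k) - φ₂ aH| ^ p * μ₂ k with hb
  have hsb : Summable b := summable_energy_core hp hsupp₂ h₂
  have hbnn : ∀ aH, 0 ≤ b aH := fun aH =>
    tsum_nonneg (fun k => mul_nonneg (rpow_abs_nonneg p _) (h₂.1 k))
  set D : WPr H₁ H₂ → ℝ := fun g =>
    (∏ y ∈ U₁.erase g.right, φ₂ ((g.left : H₁ → H₂) y)) * φ₁ g.right *
      (if ∀ y : H₁, y ∉ U₁ → (g.left : H₁ → H₂) y = 1 then (1:ℝ) else 0) with hD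
  set B : WPr H₁ H₂ → ℝ := fun g => ∑' k : H₂,
    |testFn H₁ H₂ U₁ φ₁ φ₂ (g * SemidirectProduct.inl (lampAt k)) -
      testFn H₁ H₂ U₁ φ₁ φ₂ g| ^ p * μ₂ k with hB
  have hBeval : ∀ g, B g = |D g| ^ p * b ((g.left : H₁ → H₂) g.right) := by
    intro g
    rw [hB]
    simp only [testFn_diff_inl U₁ φ₁ φ₂ hsupp₁ g]
    calc ∑' k : H₂, |D g * (φ₂ ((g.left : H₁ → H₂) g.right * k) -
            φ₂ ((g.left : H₁ → H₂) g.right))| ^ p * μ₂ k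
        = ∑' k : H₂, |D g| ^ p * (|φ₂ ((g.left : H₁ → H₂) g.right * k) -
            φ₂ ((g.left : H₁ → H₂) g.right)| ^ p * μ₂ k) := by
          refine tsum_congr (fun k => ?_); rw [abs_mul_rpow]; ring
      _ = |D g| ^ p * b ((g.left : H₁ → H₂) g.right) := by rw [tsum_mul_left]
  have hsupport : Function.support B ⊆ Set.range (jmap U₁) := by
    intro g hg
    rw [Function.mem_support, hBeval] at hg
    by_contra hcr
    have hind : ¬ ∀ y : H₁, y ∉ U₁ → (g.left : H₁ → H₂) y = 1 :=
      fun hi => hcr (mem_range_jmap U₁ hi)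
    apply hg
    rw [hD]
    simp only [if_neg hind, mul_zero, abs_zero_rpow hp0, zero_mul]
  -- value at jmap points
  have hjm : ∀ q : (↥U₁ → H₂) × H₁, B (jmap U₁ q) =
      (∏ y ∈ U₁.erase q.2, |φ₂ (extU U₁ q.1 y)| ^ p) * |φ₁ q.2| ^ p *
        b (extU U₁ q.1 q.2) := by
    rintro ⟨f, x⟩
    rw [hBeval]
    have h1 : D (jmap U₁ (f, x)) =
        (∏ y ∈ U₁.erase x, φ₂ (extU U₁ f y)) * φ₁ x := by
      rw [hD]
      show (∏ y ∈ U₁.erase x, φ₂ (extU U₁ f y)) * φ₁ x *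
        (if ∀ y : H₁, y ∉ U₁ → extU U₁ f y = 1 then (1:ℝ) else 0) = _
      rw [if_pos (fun y hy => extU_apply_not_mem U₁ f hy), mul_one]
    rw [h1, abs_mul_rpow, abs_prod_rpow]
    rfl
  set G : H₁ × (↥U₁ → H₂) → ℝ := fun q =>
    (∏ y ∈ U₁.erase q.1, |φ₂ (extU U₁ q.2 y)| ^ p) * |φ₁ q.1| ^ p *
      b (extU U₁ q.2 q.1) with hG
  have hGnn : ∀ q, 0 ≤ G q :=
    fun q => mul_nonneg (mul_nonneg (Finset.prod_nonneg fun y _ => rpow_abs_nonneg p _)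
      (rpow_abs_nonneg p _)) (hbnn _)
  have hG0 : ∀ x ∉ U₁, ∀ f : ↥U₁ → H₂, G (x, f) = 0 := by
    intro x hx f
    have hφ₁x : φ₁ x = 0 := by
      by_contra h0
      exact hx (by rw [← Finset.mem_coe, ← hsupp₁]; exact h0)
    rw [hG]
    show _ * |φ₁ x| ^ p * _ = 0
    rw [hφ₁x, abs_zero_rpow hp0, mul_zero, zero_mul]
  -- the per-x slice computation via funSplitAt
  have hslice : ∀ x (hx : x ∈ U₁),
      ∀ q : H₂ × ({j : ↥U₁ // j ≠ ⟨x, hx⟩} → H₂),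
        G (x, (Equiv.funSplitAt (⟨x, hx⟩ : ↥U₁) H₂).symm q) =
        (|φ₁ x| ^ p * b q.1) * ∏ j : {j : ↥U₁ // j ≠ ⟨x, hx⟩}, |φ₂ (q.2 j)| ^ p := by
    rintro x hx ⟨aH, r⟩
    set f : ↥U₁ → H₂ := (Equiv.funSplitAt (⟨x, hx⟩ : ↥U₁) H₂).symm (aH, r) with hf
    have hval_x : extU U₁ f x = aH := by
      rw [extU_apply_mem U₁ f hx, hf]
      simp [Equiv.funSplitAt_symm_apply]
    have hprod : ∏ y ∈ U₁.erase x, |φ₂ (extU U₁ f y)| ^ p =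
        ∏ j : {j : ↥U₁ // j ≠ ⟨x, hx⟩}, |φ₂ (r j)| ^ p := by
      rw [prod_erase_eq_subtype hx (fun y => |φ₂ (extU U₁ f y)| ^ p)]
      refine Finset.prod_congr rfl (fun j _ => ?_)
      have h1 : extU U₁ f j.1.1 = f j.1 := by
        rw [extU_apply_mem U₁ f j.1.2, Subtype.coe_eta]
      have h2 : f j.1 = r j := by
        rw [hf]
        rw [Equiv.funSplitAt_symm_apply]
        rw [dif_neg j.2]
      rw [h1, h2]
    rw [hG]
    show (∏ y ∈ U₁.erase x, |φ₂ (extU U₁ f y)| ^ p) * |φ₁ x| ^ p * b (extU U₁ f x) = _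
    rw [hprod, hval_x]
    ring
  have hs : ∀ x : H₁, Summable fun f : ↥U₁ → H₂ => G (x, f) := by
    intro x
    by_cases hx : x ∈ U₁
    · set e := (Equiv.funSplitAt (⟨x, hx⟩ : ↥U₁) H₂).symm with he
      refine e.summable_iff.mp ?_
      have heq : (fun f : ↥U₁ → H₂ => G (x, f)) ∘ e =
          fun q : H₂ × ({j : ↥U₁ // j ≠ ⟨x, hx⟩} → H₂) =>
            (|φ₁ x| ^ p * b q.1) * ∏ j : {j : ↥U₁ // j ≠ ⟨x, hx⟩}, |φ₂ (q.2 j)| ^ p :=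
        funext (fun q => hslice x hx q)
      rw [heq]
      have hR : Summable fun r : {j : ↥U₁ // j ≠ ⟨x, hx⟩} → H₂ =>
          ∏ j, |φ₂ (r j)| ^ p := by
        refine summable_of_ne_finset_zero
          (s := Fintype.piFinset (fun _ => S₂)) (fun r hr => ?_)
        obtain ⟨j, hj⟩ : ∃ j, r j ∉ S₂ := by
          by_contra hall
          push_neg at hall
          exact hr (Fintype.mem_piFinset.mpr hall)
        exact Finset.prod_eq_zero (Finset.mem_univ j) (hφ₂0 _ hj)
      exact Summable.mul_of_nonneg (f := fun aH : H₂ => |φ₁ x| ^ p * b aH)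
        (g := fun r : {j : ↥U₁ // j ≠ ⟨x, hx⟩} → H₂ => ∏ j, |φ₂ (r j)| ^ p)
        (hsb.mul_left _) hR
        (fun aH => mul_nonneg (rpow_abs_nonneg p _) (hbnn aH))
        (fun r => Finset.prod_nonneg fun j _ => rpow_abs_nonneg p _)
    · have : (fun f : ↥U₁ → H₂ => G (x, f)) = fun _ => 0 := funext (hG0 x hx)
      rw [this]
      exact summable_zero
  have hswap : ∀ q : H₁ × (↥U₁ → H₂),
      (fun q' : (↥U₁ → H₂) × H₁ =>
        (∏ y ∈ U₁.erase q'.2, |φ₂ (extU U₁ q'.1 y)| ^ p) * |φ₁ q'.2| ^ p *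
          b (extU U₁ q'.1 q'.2)) ((Equiv.prodComm H₁ (↥U₁ → H₂)) q) = G q := fun q => rfl
  obtain ⟨hGsum, hGtsum⟩ := tsum_prod_left_finite hGnn hG0 hs
  have hsB : Summable B := by
    refine ((jmap_inj U₁).summable_iff (fun w hw => ?_)).mp ?_
    · exact Classical.byContradiction fun hcne => hw (hsupport hcne)
    · have hBj : B ∘ jmap U₁ = G ∘ (Equiv.prodComm (↥U₁ → H₂) H₁) := by
        funext q
        exact hjm q
      rw [hBj]
      exact (Equiv.summable_iff _).mpr hGsum
  refine ⟨hsB, ?_⟩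
  rw [← (jmap_inj U₁).tsum_eq hsupport]
  rw [tsum_congr hjm]
  -- swap coordinates and integrate out
  rw [← (Equiv.prodComm H₁ (↥U₁ → H₂)).tsum_eq]
  rw [tsum_congr hswap, hGtsum]
  -- evaluate each slice sum
  have hxval : ∀ x ∈ U₁, ∑' f : ↥U₁ → H₂, G (x, f) =
      |φ₁ x| ^ p * ((∑ c ∈ S₂, |φ₂ c| ^ p) ^ (U₁.card - 1) * ∑' aH, b aH) := by
    intro x hx
    rw [← ((Equiv.funSplitAt (⟨x, hx⟩ : ↥U₁) H₂).symm).tsum_eq (fun f => G (x, f))]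
    rw [tsum_congr (hslice x hx)]
    rw [tsum_prod_mul' (F := fun r : {j : ↥U₁ // j ≠ ⟨x, hx⟩} → H₂ =>
        ∏ j, |φ₂ (r j)| ^ p) (G := fun aH => |φ₁ x| ^ p * b aH)
      (T := Fintype.piFinset (fun _ => S₂)) (fun r hr => ?_)
      (fun r => Finset.prod_nonneg fun j _ => rpow_abs_nonneg p _)
      (hsb.mul_left _)
      (fun aH => mul_nonneg (rpow_abs_nonneg p _) (hbnn aH))]
    · rw [sum_piFinset_prod (ι := {j : ↥U₁ // j ≠ ⟨x, hx⟩}) S₂ (fun cc => |φ₂ cc| ^ p)]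
      rw [tsum_mul_left]
      have hcard : Fintype.card {j : ↥U₁ // j ≠ (⟨x, hx⟩ : ↥U₁)} = U₁.card - 1 := by
        simp [Fintype.card_subtype_compl, Fintype.card_coe]
      rw [hcard]
      ring
    · obtain ⟨j, hj⟩ : ∃ j, r j ∉ S₂ := by
        by_contra hall
        push_neg at hall
        exact hr (Fintype.mem_piFinset.mpr hall)
      exact Finset.prod_eq_zero (Finset.mem_univ j) (hφ₂0 _ hj)
  rw [Finset.sum_congr rfl hxval, ← Finset.sum_mul]
  rw [hb]
  ring

end AuxWreath8
/-- Properties of the product test function on a wreath product: its `p`-norm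
factorizes, its support has size at most `|U₁|·|support φ₂|^{|U₁|}`, and its
Rayleigh quotient for `μ = (1/2)(μ₁+μ₂)` is the average of the Rayleigh
quotients of `φ₁` and `φ₂`. -/
theorem wreath_test_function (H₁ H₂ : Type) [Group H₁] [Group H₂]
    (μ₁ : H₁ → ℝ) (μ₂ : H₂ → ℝ) (h₁ : IsSymProb μ₁) (h₂ : IsSymProb μ₂)
    (p : ℝ) (hp : 1 ≤ p)
    (U₁ : Finset H₁) (φ₁ : H₁ → ℝ) (φ₂ : H₂ → ℝ)
    (hsupp₁ : Function.support φ₁ = (U₁ : Set H₁))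
    (hsupp₂ : (Function.support φ₂).Finite)
    (hn₁ : normP p φ₁ ≠ 0) (hn₂ : normP p φ₂ ≠ 0) :
    normP p (testFn H₁ H₂ U₁ φ₁ φ₂) = normP p φ₁ * normP p φ₂ ^ U₁.card ∧
    (Function.support (testFn H₁ H₂ U₁ φ₁ φ₂)).ncard ≤
      U₁.card * (Function.support φ₂).ncard ^ U₁.card ∧
    energyP p (wrMeasure H₁ H₂ μ₁ μ₂) (testFn H₁ H₂ U₁ φ₁ φ₂) /
        normP p (testFn H₁ H₂ U₁ φ₁ φ₂) =
      (1 / 2) * (energyP p μ₁ φ₁ / normP p φ₁ + energyP p μ₂ φ₂ / normP p φ₂) := by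
  classical
  have hp0 : p ≠ 0 := by positivity
  have hfin : (Function.support (testFn H₁ H₂ U₁ φ₁ φ₂)).Finite :=
    testFn_support_finite U₁ φ₁ φ₂ hsupp₁ hsupp₂
  refine ⟨normP_testFn hp U₁ φ₁ φ₂ hsupp₁ hsupp₂,
    support_testFn_card hp U₁ φ₁ φ₂ hsupp₁ hsupp₂, ?_⟩
  obtain ⟨hsA, hA⟩ := tsum_A_full hp U₁ φ₁ φ₂ hsupp₁ hsupp₂ h₁
  obtain ⟨hsB, hB⟩ := tsum_B_full hp U₁ φ₁ φ₂ hsupp₁ hsupp₂ h₂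
  have hφ₂0 : ∀ c ∉ hsupp₂.toFinset, |φ₂ c| ^ p = 0 := fun c hc => by
    have : φ₂ c = 0 := by
      by_contra h0; exact hc (hsupp₂.mem_toFinset.mpr h0)
    rw [this, abs_zero_rpow hp0]
  have hφ₁0 : ∀ x ∉ U₁, |φ₁ x| ^ p = 0 := fun x hx => by
    have : φ₁ x = 0 := by
      by_contra h0
      exact hx (by rw [← Finset.mem_coe, ← hsupp₁]; exact h0)
    rw [this, abs_zero_rpow hp0]
  have hn2eq : normP p φ₂ = ∑ c ∈ hsupp₂.toFinset, |φ₂ c| ^ p := tsum_eq_sum hφ₂0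
  have hn1eq : normP p φ₁ = ∑ x ∈ U₁, |φ₁ x| ^ p := tsum_eq_sum hφ₁0
  have hU₁ : U₁.Nonempty := by
    rcases Finset.eq_empty_or_nonempty U₁ with h | h
    · exfalso
      apply hn₁
      have hz : φ₁ = fun _ => 0 := by
        funext x
        by_contra h0
        have hx : x ∈ Function.support φ₁ := h0
        rw [hsupp₁, h] at hx
        simpa using hx
      show (∑' x : H₁, |φ₁ x| ^ p) = 0
      rw [hz]
      simp [Real.zero_rpow hp0]
    · exact h
  have hm : 1 ≤ U₁.card := Finset.card_pos.mpr hU₁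
  have hEφ : energyP p (wrMeasure H₁ H₂ μ₁ μ₂) (testFn H₁ H₂ U₁ φ₁ φ₂) =
      (1/2) * ((1/2) * ((normP p φ₂ ^ U₁.card *
          ∑' x : H₁, ∑' z : H₁, |φ₁ (x * z) - φ₁ x| ^ p * μ₁ z) +
        ((normP p φ₁ * normP p φ₂ ^ (U₁.card - 1)) *
          ∑' aH : H₂, ∑' k : H₂, |φ₂ (aH * k) - φ₂ aH| ^ p * μ₂ k))) := by
    unfold energyP
    rw [tsum_congr (fun g => wr_inner_sum hp h₁ h₂ (bounded_of_finite_support hfin) g)]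
    rw [tsum_mul_left, Summable.tsum_add hsA hsB, hA, hB, ← hn2eq, ← hn1eq]
  have hE1 : energyP p μ₁ φ₁ =
      (1/2) * ∑' x : H₁, ∑' z : H₁, |φ₁ (x * z) - φ₁ x| ^ p * μ₁ z := rfl
  have hE2 : energyP p μ₂ φ₂ =
      (1/2) * ∑' aH : H₂, ∑' k : H₂, |φ₂ (aH * k) - φ₂ aH| ^ p * μ₂ k := rfl
  rw [hEφ, hE1, hE2, normP_testFn hp U₁ φ₁ φ₂ hsupp₁ hsupp₂]
  have hpow : normP p φ₂ ^ U₁.card = normP p φ₂ ^ (U₁.card - 1) * normP p φ₂ := by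
    rw [← pow_succ, Nat.sub_add_cancel hm]
  rw [hpow]
  have h2ne : normP p φ₂ ^ (U₁.card - 1) ≠ 0 := pow_ne_zero _ hn₂
  field_simp
end

section
/- Moving-average pseudo-Poincaré on groups of polynomial growth: if G has polynomial volume growth (V(2r) ≤ C_D·V(r) for all r ≥ 1), then for each p ≥ 1 there is a constant C(G,p) such that for all integers r > s ≥ 1 and all finitely supported f: G → ℝ, Σ_{x,y}|f(xy)−f(x)|^p·u_r(y) ≤ C(G,p)·(r/s)^p·Σ_{x,y}|f(xy)−f(x)|^p·u_s(y), where u_t is the uniform probability measure on the word-ball of radius t. -/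
open scoped BigOperators

/-- Word length with respect to a finite symmetric generating set `S`. -/
noncomputable def wordLength {G : Type*} [Group G] (S : Finset G) (g : G) : ℕ :=
  sInf {n : ℕ | ∃ l : List G, (∀ x ∈ l, x ∈ S) ∧ l.length = n ∧ l.prod = g}

/-- The word ball of radius `r`. -/
def ballSet {G : Type*} [Group G] (S : Finset G) (r : ℝ) : Set G :=
  {g : G | ((wordLength S g : ℝ)) ≤ r}

open Classical in
/-- Uniform probability measure on the word ball of radius `r`. -/
noncomputable def unifBall {G : Type*} [Group G] (S : Finset G) (r : ℝ) : G → ℝ :=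
  fun y => if ((wordLength S y : ℝ)) ≤ r then (((ballSet S r).ncard : ℝ))⁻¹ else 0

set_option maxHeartbeats 1000000

section WL
variable {G : Type*} [Group G] {S : Finset G}

private lemma wl_le {l : List G} (hl : ∀ x ∈ l, x ∈ S) : wordLength S l.prod ≤ l.length :=
  Nat.sInf_le ⟨l, hl, rfl, rfl⟩

private def wordSubgroup (S : Finset G) (hsym : ∀ s ∈ S, s⁻¹ ∈ S) : Subgroup G where
  carrier := {g : G | ∃ l : List G, (∀ x ∈ l, x ∈ S) ∧ l.prod = g}
  one_mem' := ⟨[], by simp, rfl⟩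
  mul_mem' := by
    rintro a b ⟨l1, h1, rfl⟩ ⟨l2, h2, rfl⟩
    exact ⟨l1 ++ l2, by intro x hx; rcases List.mem_append.1 hx with h | h
                        exacts [h1 x h, h2 x h], by rw [List.prod_append]⟩
  inv_mem' := by
    rintro a ⟨l, h, rfl⟩
    refine ⟨(l.map fun x => x⁻¹).reverse, ?_, (List.prod_inv_reverse l).symm⟩
    intro x hx
    rcases List.mem_map.1 (List.mem_reverse.1 hx) with ⟨y, hy, rfl⟩
    exact hsym y (h y hy)

private lemma exists_word (hsym : ∀ s ∈ S, s⁻¹ ∈ S)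
    (hgen : Subgroup.closure (S : Set G) = ⊤) (g : G) :
    ∃ l : List G, (∀ x ∈ l, x ∈ S) ∧ l.prod = g := by
  have h : Subgroup.closure (S : Set G) ≤ wordSubgroup S hsym := by
    rw [Subgroup.closure_le]
    intro x hx
    exact ⟨[x], by simpa using hx, by simp⟩
  have : g ∈ wordSubgroup S hsym := h (by rw [hgen]; trivial)
  exact this

private lemma exists_word_length (hsym : ∀ s ∈ S, s⁻¹ ∈ S)
    (hgen : Subgroup.closure (S : Set G) = ⊤) (g : G) :
    ∃ l : List G, (∀ x ∈ l, x ∈ S) ∧ l.length = wordLength S g ∧ l.prod = g := by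
  have hne : {n : ℕ | ∃ l : List G, (∀ x ∈ l, x ∈ S) ∧ l.length = n ∧ l.prod = g}.Nonempty := by
    obtain ⟨l, hl, hp⟩ := exists_word hsym hgen g
    exact ⟨l.length, l, hl, rfl, hp⟩
  exact Nat.sInf_mem hne

private lemma wl_one : wordLength S (1 : G) = 0 := by
  have : wordLength S (List.prod ([] : List G)) ≤ 0 := wl_le (by simp)
  simpa using Nat.le_zero.1 this

private lemma eq_one_of_wl (hsym : ∀ s ∈ S, s⁻¹ ∈ S)
    (hgen : Subgroup.closure (S : Set G) = ⊤) {g : G} (hg : wordLength S g = 0) : g = 1 := by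
  obtain ⟨l, -, hlen, hprod⟩ := exists_word_length hsym hgen g
  have : l = [] := List.length_eq_zero_iff.1 (by omega)
  subst this; simpa using hprod.symm

private lemma wl_mul (hsym : ∀ s ∈ S, s⁻¹ ∈ S)
    (hgen : Subgroup.closure (S : Set G) = ⊤) (g h : G) :
    wordLength S (g * h) ≤ wordLength S g + wordLength S h := by
  obtain ⟨l1, h1, e1, p1⟩ := exists_word_length hsym hgen g
  obtain ⟨l2, h2, e2, p2⟩ := exists_word_length hsym hgen h
  have := wl_le (l := l1 ++ l2) (by intro x hx; rcases List.mem_append.1 hx with hh | hh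
                                    exacts [h1 x hh, h2 x hh])
  rw [List.prod_append, p1, p2, List.length_append, e1, e2] at this
  exact this

private lemma wl_inv (hsym : ∀ s ∈ S, s⁻¹ ∈ S)
    (hgen : Subgroup.closure (S : Set G) = ⊤) (g : G) :
    wordLength S g⁻¹ ≤ wordLength S g := by
  obtain ⟨l, hl, e, pr⟩ := exists_word_length hsym hgen g
  have := wl_le (l := (l.map fun x => x⁻¹).reverse) (by
    intro x hx
    rcases List.mem_map.1 (List.mem_reverse.1 hx) with ⟨y, hy, rfl⟩
    exact hsym y (hl y hy))
  rw [← List.prod_inv_reverse, pr] at this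
  simpa [e] using this

private lemma ball_finite (hsym : ∀ s ∈ S, s⁻¹ ∈ S)
    (hgen : Subgroup.closure (S : Set G) = ⊤) (t : ℝ) : (ballSet S t).Finite := by
  classical
  set n := ⌊t⌋₊ with hn
  have hsub : ballSet S t ⊆
      (fun l : List {x // x ∈ S} => (l.map Subtype.val).prod) ''
        {l : List {x // x ∈ S} | l.length ≤ n} := by
    intro g hg
    have hg' : (wordLength S g : ℝ) ≤ t := hg
    have hle : wordLength S g ≤ n := Nat.le_floor (by exact_mod_cast hg')
    obtain ⟨l, hl, e, pr⟩ := exists_word_length hsym hgen g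
    refine ⟨l.attach.map (fun x => (⟨x.1, hl x.1 x.2⟩ : {x // x ∈ S})), ?_, ?_⟩
    · simp only [Set.mem_setOf_eq, List.length_map, List.length_attach]
      omega
    · show ((l.attach.map (fun x : {x // x ∈ l} =>
          (⟨x.1, hl x.1 x.2⟩ : {x // x ∈ S}))).map Subtype.val).prod = g
      rw [List.map_map]
      have h2 : (Subtype.val ∘ fun x : {x // x ∈ l} =>
          (⟨x.1, hl x.1 x.2⟩ : {x // x ∈ S})) = fun x : {x // x ∈ l} => (x.1 : G) := rfl
      rw [h2]
      simpa using pr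
  exact ((List.finite_length_le {x // x ∈ S} n).image _).subset hsub

private lemma mem_ball_iff {t : ℝ} {g : G} : g ∈ ballSet S t ↔ (wordLength S g : ℝ) ≤ t :=
  Iff.rfl

private lemma one_mem_ball {t : ℝ} (ht : 0 ≤ t) : (1 : G) ∈ ballSet S t := by
  simp [mem_ball_iff, wl_one, ht]

private lemma ball_mono {t t' : ℝ} (h : t ≤ t') : ballSet S t ⊆ ballSet S t' :=
  fun _ hg => le_trans hg h

end WL

section AN
variable {G : Type*} [Group G] {S : Finset G}

private noncomputable def gfun (f : G → ℝ) (p : ℝ) (y : G) : ℝ :=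
  ∑' x : G, |f (x * y) - f x| ^ p

private lemma summable_pair {f : G → ℝ} (hf : (Function.support f).Finite)
    {p : ℝ} (hp : 1 ≤ p) (a b : G) :
    Summable fun x : G => |f (x * a) - f (x * b)| ^ p := by
  classical
  apply summable_of_ne_finset_zero
    (s := hf.toFinset.image (· * a⁻¹) ∪ hf.toFinset.image (· * b⁻¹))
  intro x hx
  simp only [Finset.mem_union, Finset.mem_image, Set.Finite.mem_toFinset,
    Function.mem_support, not_or, not_exists, not_and] at hx
  have h1 : f (x * a) = 0 := by
    by_contra h
    exact (hx.1 (x * a) h) (by group)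
  have h2 : f (x * b) = 0 := by
    by_contra h
    exact (hx.2 (x * b) h) (by group)
  rw [h1, h2, sub_zero, abs_zero, Real.zero_rpow (by linarith)]

private lemma summable_phi {f : G → ℝ} (hf : (Function.support f).Finite)
    {p : ℝ} (hp : 1 ≤ p) (y : G) :
    Summable fun x : G => |f (x * y) - f x| ^ p := by
  have := summable_pair hf hp y 1
  simpa using this

private lemma gfun_nonneg (f : G → ℝ) (p : ℝ) (y : G) : 0 ≤ gfun f p y :=
  tsum_nonneg fun x => Real.rpow_nonneg (abs_nonneg _) p

private lemma tsum_pair (f : G → ℝ) (p : ℝ) (a b : G) :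
    ∑' x : G, |f (x * a) - f (x * b)| ^ p = gfun f p (b⁻¹ * a) := by
  unfold gfun
  rw [← Equiv.tsum_eq (Equiv.mulRight b) (fun x => |f (x * (b⁻¹ * a)) - f x| ^ p)]
  refine tsum_congr fun x => ?_
  have h1 : (Equiv.mulRight b) x * (b⁻¹ * a) = x * a := by
    show x * b * (b⁻¹ * a) = x * a; group
  have h2 : ((Equiv.mulRight b) x : G) = x * b := rfl
  rw [h1, h2]

private lemma conv_rpow {p : ℝ} (hp : 1 ≤ p) (n : ℕ) (hn : 0 < n) (d : ℕ → ℝ) :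
    |∑ j ∈ Finset.range n, d j| ^ p
      ≤ (n : ℝ) ^ (p - 1) * ∑ j ∈ Finset.range n, |d j| ^ p := by
  have hn0 : (0 : ℝ) < n := by exact_mod_cast hn
  have hp0 : (0 : ℝ) ≤ p := by linarith
  have step1 : |∑ j ∈ Finset.range n, d j| ^ p ≤ (∑ j ∈ Finset.range n, |d j|) ^ p :=
    Real.rpow_le_rpow (abs_nonneg _) (Finset.abs_sum_le_sum_abs _ _) hp0
  have step2 : (∑ j ∈ Finset.range n, |d j|) ^ p
      ≤ ∑ j ∈ Finset.range n, (1 / (n : ℝ)) * ((n : ℝ) * |d j|) ^ p := by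
    have := Real.rpow_arith_mean_le_arith_mean_rpow (Finset.range n)
      (fun _ => 1 / (n : ℝ)) (fun j => (n : ℝ) * |d j|)
      (fun i _ => by positivity) (by
        rw [Finset.sum_const, Finset.card_range, nsmul_eq_mul]
        field_simp)
      (fun i _ => by positivity) hp
    calc (∑ j ∈ Finset.range n, |d j|) ^ p
        = (∑ j ∈ Finset.range n, (1 / (n : ℝ)) * ((n : ℝ) * |d j|)) ^ p := by
          congr 1; refine Finset.sum_congr rfl fun j _ => ?_; field_simp
      _ ≤ _ := this
  have step3 : ∀ j, (1 / (n : ℝ)) * ((n : ℝ) * |d j|) ^ p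
      = (n : ℝ) ^ (p - 1) * |d j| ^ p := by
    intro j
    rw [Real.mul_rpow (le_of_lt hn0) (abs_nonneg _), Real.rpow_sub hn0, Real.rpow_one]
    field_simp
  calc |∑ j ∈ Finset.range n, d j| ^ p ≤ _ := le_trans step1 step2
    _ = ∑ j ∈ Finset.range n, (n : ℝ) ^ (p - 1) * |d j| ^ p :=
        Finset.sum_congr rfl fun j _ => step3 j
    _ = (n : ℝ) ^ (p - 1) * ∑ j ∈ Finset.range n, |d j| ^ p := by
        rw [Finset.mul_sum]

private lemma g_le_avg {f : G → ℝ} (hf : (Function.support f).Finite)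
    {p : ℝ} (hp : 1 ≤ p) (z ξ : G) :
    gfun f p z ≤ (2 : ℝ) ^ (p - 1) * (gfun f p (ξ⁻¹ * z) + gfun f p ξ) := by
  have hpt : ∀ x : G, |f (x * z) - f x| ^ p
      ≤ (2 : ℝ) ^ (p - 1) * (|f (x * z) - f (x * ξ)| ^ p + |f (x * ξ) - f x| ^ p) := by
    intro x
    have := conv_rpow hp 2 (by norm_num)
      (fun j => if j = 0 then f (x * z) - f (x * ξ) else f (x * ξ) - f x)
    simp only [Finset.sum_range_succ, Finset.sum_range_one] at this
    norm_num at this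
    convert this using 2
  have hs1 : Summable fun x : G => |f (x * z) - f (x * ξ)| ^ p := summable_pair hf hp z ξ
  have hs2 : Summable fun x : G => |f (x * ξ) - f x| ^ p := summable_phi hf hp ξ
  calc gfun f p z
      ≤ ∑' x : G, (2 : ℝ) ^ (p - 1) * (|f (x * z) - f (x * ξ)| ^ p + |f (x * ξ) - f x| ^ p) := by
        refine Summable.tsum_le_tsum hpt (summable_phi hf hp z) ?_
        exact ((hs1.add hs2).mul_left _)
    _ = (2 : ℝ) ^ (p - 1) * (gfun f p (ξ⁻¹ * z) + gfun f p ξ) := by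
        rw [tsum_mul_left, Summable.tsum_add hs1 hs2, tsum_pair f p z ξ]
        rfl

private lemma card_mul_g_le {f : G → ℝ} (hf : (Function.support f).Finite)
    {p : ℝ} (hp : 1 ≤ p) (Ξ T : Finset G) (z : G)
    (h1 : Ξ ⊆ T) (h2 : ∀ ξ ∈ Ξ, ξ⁻¹ * z ∈ T) :
    (Ξ.card : ℝ) * gfun f p z ≤ (2 : ℝ) ^ p * ∑ η ∈ T, gfun f p η := by
  classical
  set E := ∑ η ∈ T, gfun f p η with hE
  have hA : ∑ ξ ∈ Ξ, gfun f p (ξ⁻¹ * z) ≤ E := by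
    have himg : ∑ η ∈ Ξ.image (fun ξ => ξ⁻¹ * z), gfun f p η
        = ∑ ξ ∈ Ξ, gfun f p (ξ⁻¹ * z) :=
      Finset.sum_image (by intro a _ b _ hab; simpa using hab)
    rw [← himg]
    exact Finset.sum_le_sum_of_subset_of_nonneg
      (by intro η hη; obtain ⟨ξ, hξ, rfl⟩ := Finset.mem_image.1 hη; exact h2 ξ hξ)
      (fun η _ _ => gfun_nonneg f p η)
  have hB : ∑ ξ ∈ Ξ, gfun f p ξ ≤ E :=
    Finset.sum_le_sum_of_subset_of_nonneg h1 (fun η _ _ => gfun_nonneg f p η)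
  have h2p : (0:ℝ) ≤ (2:ℝ) ^ (p-1) := Real.rpow_nonneg (by norm_num) _
  calc (Ξ.card : ℝ) * gfun f p z = ∑ _ξ ∈ Ξ, gfun f p z := by
        rw [Finset.sum_const, nsmul_eq_mul]
    _ ≤ ∑ ξ ∈ Ξ, (2 : ℝ) ^ (p - 1) * (gfun f p (ξ⁻¹ * z) + gfun f p ξ) :=
        Finset.sum_le_sum fun ξ _ => g_le_avg hf hp z ξ
    _ = (2 : ℝ) ^ (p - 1) * ((∑ ξ ∈ Ξ, gfun f p (ξ⁻¹ * z)) + ∑ ξ ∈ Ξ, gfun f p ξ) := by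
        rw [← Finset.mul_sum, Finset.sum_add_distrib]
    _ ≤ (2 : ℝ) ^ (p - 1) * (E + E) := by
        apply mul_le_mul_of_nonneg_left (by linarith) h2p
    _ = (2 : ℝ) ^ p * E := by
        have : (2 : ℝ) ^ p = (2 : ℝ) ^ (p - 1) * 2 := by
          rw [← Real.rpow_add_one (by norm_num : (2:ℝ) ≠ 0) (p-1)]
          norm_num
        rw [this]; ring

end AN

section CH
variable {G : Type*} [Group G] {S : Finset G}

private lemma chunk (hsym : ∀ s ∈ S, s⁻¹ ∈ S)
    (hgen : Subgroup.closure (S : Set G) = ⊤) (a : ℕ) :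
    ∀ (K : ℕ) (y : G), wordLength S y ≤ K * a →
      ∃ L : List G, (∀ z ∈ L, wordLength S z ≤ a) ∧ L.length = K ∧ L.prod = y := by
  intro K
  induction K with
  | zero =>
    intro y hy
    have hy1 : y = 1 := eq_one_of_wl hsym hgen (by omega)
    exact ⟨[], by simp, rfl, by simp [hy1]⟩
  | succ K ih =>
    intro y hy
    obtain ⟨l, hl, e, pr⟩ := exists_word_length hsym hgen y
    rw [Nat.succ_mul] at hy
    have h1 : wordLength S (l.take a).prod ≤ a := by
      refine le_trans (wl_le fun x hx => hl x ((List.take_sublist a l).mem hx)) ?_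
      simp [List.length_take]
    have h2 : wordLength S (l.drop a).prod ≤ K * a := by
      refine le_trans (wl_le fun x hx => hl x ((List.drop_sublist a l).mem hx)) ?_
      have : l.length ≤ K * a + a := by omega
      simp only [List.length_drop]
      omega
    obtain ⟨L, hL, hlen, hprod⟩ := ih _ h2
    refine ⟨(l.take a).prod :: L, ?_, by simp [hlen], ?_⟩
    · rintro z hz
      rcases List.mem_cons.1 hz with rfl | hz
      exacts [h1, hL z hz]
    · rw [List.prod_cons, hprod, ← pr, List.prod_take_mul_prod_drop]

private lemma g_prod_le {f : G → ℝ} (hf : (Function.support f).Finite)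
    {p : ℝ} (hp : 1 ≤ p) (L : List G) (hL : L ≠ []) :
    gfun f p L.prod ≤ (L.length : ℝ) ^ (p - 1) *
      ∑ j ∈ Finset.range L.length, gfun f p (L.getD j 1) := by
  set K := L.length with hKdef
  have hK : 0 < K := List.length_pos_iff.2 hL
  set w : ℕ → G := fun j => (L.take j).prod with hw
  have hw0 : w 0 = 1 := by simp [hw]
  have hwK : w K = L.prod := by simp [hw, hKdef]
  have hwsucc : ∀ j, j < K → w (j + 1) = w j * L.getD j 1 := by
    intro j hj
    simp [hw, List.prod_take_succ L j hj, List.getD, List.getElem?_eq_getElem hj]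
  have hpt : ∀ x : G, |f (x * L.prod) - f x| ^ p
      ≤ (K : ℝ) ^ (p - 1) * ∑ j ∈ Finset.range K, |f (x * w (j + 1)) - f (x * w j)| ^ p := by
    intro x
    have htel : ∑ j ∈ Finset.range K, (f (x * w (j + 1)) - f (x * w j))
        = f (x * L.prod) - f x := by
      rw [Finset.sum_range_sub (f := fun j => f (x * w j)), hwK, hw0, mul_one]
    calc |f (x * L.prod) - f x| ^ p
        = |∑ j ∈ Finset.range K, (f (x * w (j + 1)) - f (x * w j))| ^ p := by rw [htel]
      _ ≤ _ := conv_rpow hp K hK _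
  have hsum : ∀ j, Summable fun x : G => |f (x * w (j + 1)) - f (x * w j)| ^ p :=
    fun j => summable_pair hf hp (w (j + 1)) (w j)
  calc gfun f p L.prod
      ≤ ∑' x : G, (K : ℝ) ^ (p - 1) *
          ∑ j ∈ Finset.range K, |f (x * w (j + 1)) - f (x * w j)| ^ p := by
        refine Summable.tsum_le_tsum hpt (summable_phi hf hp _) ?_
        exact (summable_sum fun j _ => hsum j).mul_left _
    _ = (K : ℝ) ^ (p - 1) * ∑ j ∈ Finset.range K,
          ∑' x : G, |f (x * w (j + 1)) - f (x * w j)| ^ p := by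
        rw [tsum_mul_left, Summable.tsum_finsetSum fun j _ => hsum j]
    _ = (K : ℝ) ^ (p - 1) * ∑ j ∈ Finset.range K, gfun f p (L.getD j 1) := by
        congr 1
        refine Finset.sum_congr rfl fun j hj => ?_
        rw [tsum_pair f p (w (j + 1)) (w j), hwsucc j (Finset.mem_range.1 hj),
          inv_mul_cancel_left]
end CH

section LHS
variable {G : Type*} [Group G] {S : Finset G}

private lemma lhs_eq (hsym : ∀ s ∈ S, s⁻¹ ∈ S)
    (hgen : Subgroup.closure (S : Set G) = ⊤) {f : G → ℝ}
    (hf : (Function.support f).Finite) {p : ℝ} (hp : 1 ≤ p) (t : ℝ) :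
    ∑' x : G, ∑' y : G, |f (x * y) - f x| ^ p * unifBall S t y
      = (∑ y ∈ (ball_finite hsym hgen t).toFinset, gfun f p y)
          * (((ballSet S t).ncard : ℝ))⁻¹ := by
  classical
  set B := (ball_finite hsym hgen t).toFinset with hB
  have hinner : ∀ x : G, ∑' y : G, |f (x * y) - f x| ^ p * unifBall S t y
      = ∑ y ∈ B, |f (x * y) - f x| ^ p * (((ballSet S t).ncard : ℝ))⁻¹ := by
    intro x
    rw [tsum_eq_sum (s := B) (f := fun y => |f (x * y) - f x| ^ p * unifBall S t y) ?_]
    · refine Finset.sum_congr rfl fun y hy => ?_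
      have hmem : (wordLength S y : ℝ) ≤ t := by
        have := (Set.Finite.mem_toFinset _).1 (hB ▸ hy)
        exact this
      simp only [unifBall]
      rw [if_pos hmem]
    · intro y hy
      have hmem : ¬ (wordLength S y : ℝ) ≤ t := by
        intro hc
        exact hy ((Set.Finite.mem_toFinset _).2 hc)
      simp only [unifBall]
      rw [if_neg hmem, mul_zero]
  calc ∑' x : G, ∑' y : G, |f (x * y) - f x| ^ p * unifBall S t y
      = ∑' x : G, ∑ y ∈ B, |f (x * y) - f x| ^ p * (((ballSet S t).ncard : ℝ))⁻¹ :=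
        tsum_congr hinner
    _ = ∑ y ∈ B, ∑' x : G, |f (x * y) - f x| ^ p * (((ballSet S t).ncard : ℝ))⁻¹ :=
        Summable.tsum_finsetSum fun y _ => (summable_phi hf hp y).mul_right _
    _ = ∑ y ∈ B, gfun f p y * (((ballSet S t).ncard : ℝ))⁻¹ :=
        Finset.sum_congr rfl fun y _ => tsum_mul_right
    _ = (∑ y ∈ B, gfun f p y) * (((ballSet S t).ncard : ℝ))⁻¹ :=
        (Finset.sum_mul _ _ _).symm

end LHS


/-- Moving-average pseudo-Poincaré inequality on groups of polynomial growth
(volume doubling): for each `p ≥ 1` there is `C(G,p)` such that for all integers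
`r > s ≥ 1` and all finitely supported `f`,
`Σ_{x,y}|f(xy)−f(x)|^p u_r(y) ≤ C·(r/s)^p·Σ_{x,y}|f(xy)−f(x)|^p u_s(y)`. -/
theorem moving_average_pseudo_poincare {G : Type*} [Group G]
    (S : Finset G) (hone : (1 : G) ∈ S) (hsym : ∀ s ∈ S, s⁻¹ ∈ S)
    (hgen : Subgroup.closure (S : Set G) = ⊤)
    (C_D : ℝ) (hdoub : ∀ r : ℝ, 1 ≤ r →
      (((ballSet S (2 * r)).ncard : ℝ)) ≤ C_D * ((ballSet S r).ncard : ℝ))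
    (p : ℝ) (hp : 1 ≤ p) :
    ∃ C > (0:ℝ), ∀ r s : ℕ, 1 ≤ s → s < r → ∀ f : G → ℝ,
      (Function.support f).Finite →
      (∑' x : G, ∑' y : G, |f (x * y) - f x| ^ p * unifBall S (r : ℝ) y) ≤
        C * ((r : ℝ) / (s : ℝ)) ^ p *
          ∑' x : G, ∑' y : G, |f (x * y) - f x| ^ p * unifBall S (s : ℝ) y := by
  classical
  have hp0 : (0:ℝ) ≤ p := by linarith
  have hfin : ∀ t : ℝ, (ballSet S t).Finite := ball_finite hsym hgen
  have hposN : ∀ t : ℝ, 0 ≤ t → 0 < (ballSet S t).ncard := fun t ht =>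
    (Set.ncard_pos (hfin t)).2 ⟨1, one_mem_ball ht⟩
  have hmono : ∀ t t' : ℝ, t ≤ t' → (ballSet S t).ncard ≤ (ballSet S t').ncard :=
    fun t t' h => Set.ncard_le_ncard (ball_mono h) (hfin t')
  have hCD : 1 ≤ C_D := by
    have h1 : (0:ℕ) < (ballSet S (1:ℝ)).ncard := hposN 1 zero_le_one
    have h2 := hdoub 1 le_rfl
    have h3 : ((ballSet S (1:ℝ)).ncard:ℝ) ≤ ((ballSet S (2*(1:ℝ))).ncard:ℝ) := by
      exact_mod_cast hmono 1 (2*1) (by norm_num)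
    have h4 : (0:ℝ) < ((ballSet S (1:ℝ)).ncard:ℝ) := by exact_mod_cast h1
    nlinarith
  have hCD0 : (0:ℝ) ≤ C_D := by linarith
  have h36 : (0:ℝ) < (36:ℝ) ^ p := Real.rpow_pos_of_pos (by norm_num) p
  have h8 : (0:ℝ) < (8:ℝ) ^ p := Real.rpow_pos_of_pos (by norm_num) p
  have h2p : (0:ℝ) < (2:ℝ) ^ p := Real.rpow_pos_of_pos (by norm_num) p
  have hBnn : (0:ℝ) ≤ (8:ℝ)^p * C_D * S.card :=
    mul_nonneg (mul_nonneg (le_of_lt h8) hCD0) (Nat.cast_nonneg _)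
  have hAnn : (0:ℝ) ≤ (36:ℝ)^p * C_D^4 := by positivity
  refine ⟨(36:ℝ)^p * C_D^4 + (8:ℝ)^p * C_D * S.card + 1, by linarith, ?_⟩
  intro r s hs hsr f hf
  set C : ℝ := (36:ℝ)^p * C_D^4 + (8:ℝ)^p * C_D * S.card + 1 with hCdef
  rw [lhs_eq hsym hgen hf hp ((r:ℕ):ℝ), lhs_eq hsym hgen hf hp ((s:ℕ):ℝ)]
  have hsR : (0:ℝ) < ((s:ℕ):ℝ) := by exact_mod_cast (by omega : 0 < s)
  have hrR : (0:ℝ) < ((r:ℕ):ℝ) := by exact_mod_cast (by omega : 0 < r)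
  have hrsn : (0:ℝ) ≤ (r:ℝ)/(s:ℝ) := by positivity
  have hNs : (0:ℝ) < ((ballSet S ((s:ℕ):ℝ)).ncard : ℝ) := by
    exact_mod_cast hposN _ (by positivity)
  have hNr : (0:ℝ) < ((ballSet S ((r:ℕ):ℝ)).ncard : ℝ) := by
    exact_mod_cast hposN _ (by positivity)
  set E : ℝ := ∑ y ∈ (ball_finite hsym hgen ((s:ℕ):ℝ)).toFinset, gfun f p y with hEdef
  have hE0 : 0 ≤ E := Finset.sum_nonneg fun y _ => gfun_nonneg f p y
  have key : ∀ a c : ℕ, 1 ≤ a → c + a ≤ s →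
      (∑ y ∈ (ball_finite hsym hgen ((r:ℕ):ℝ)).toFinset, gfun f p y)
          * (((ballSet S ((r:ℕ):ℝ)).ncard : ℝ))⁻¹
        ≤ (2:ℝ)^p * ((r / a + 1 : ℕ) : ℝ)^p * (((ballSet S ((c:ℕ):ℝ)).ncard : ℝ))⁻¹ * E := by
    intro a c ha hcas
    set K : ℕ := r / a + 1 with hK
    have hK1 : 1 ≤ K := Nat.succ_le_succ (Nat.zero_le _)
    have hKR : (0:ℝ) < (K:ℝ) := by exact_mod_cast hK1
    have hMc : (0:ℝ) < ((ballSet S ((c:ℕ):ℝ)).ncard : ℝ) := by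
      exact_mod_cast hposN _ (by positivity)
    have hbound : ∀ y ∈ (ball_finite hsym hgen ((r:ℕ):ℝ)).toFinset,
        gfun f p y ≤ (2:ℝ)^p * (K:ℝ)^p * (((ballSet S ((c:ℕ):ℝ)).ncard : ℝ))⁻¹ * E := by
      intro y hy
      have hyr : wordLength S y ≤ r := by
        have hh : y ∈ ballSet S ((r:ℕ):ℝ) := by simpa using hy
        have hh2 : (wordLength S y : ℝ) ≤ ((r:ℕ):ℝ) := hh
        exact_mod_cast hh2
      have h7 : r < K * a := by
        rw [hK]
        exact (Nat.div_lt_iff_lt_mul (by omega : 0 < a)).1 (Nat.lt_succ_self _)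
      obtain ⟨L, hLa, hLlen, hLprod⟩ := chunk hsym hgen a K y (hyr.trans (le_of_lt h7))
      have hLne : L ≠ [] := by
        intro h; rw [h] at hLlen; simp at hLlen
      have h1 := g_prod_le hf hp L hLne
      rw [hLprod, hLlen] at h1
      have h2 : ∀ j ∈ Finset.range K,
          gfun f p (L.getD j 1)
            ≤ (2:ℝ)^p * E * (((ballSet S ((c:ℕ):ℝ)).ncard : ℝ))⁻¹ := by
        intro j hj
        have hjlt : j < L.length := by rw [hLlen]; exact Finset.mem_range.1 hj
        have hgd : L.getD j 1 = L[j]'hjlt := by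
          simp [List.getD, List.getElem?_eq_getElem hjlt]
        have hmemL : L.getD j 1 ∈ L := by
          rw [hgd]; exact List.getElem_mem hjlt
        have hwz : wordLength S (L.getD j 1) ≤ a := hLa _ hmemL
        have hsub : (ball_finite hsym hgen ((c:ℕ):ℝ)).toFinset
            ⊆ (ball_finite hsym hgen ((s:ℕ):ℝ)).toFinset := by
          intro ξ hξ
          rw [Set.Finite.mem_toFinset] at hξ ⊢
          refine ball_mono ?_ hξ
          exact_mod_cast (by omega : c ≤ s)
        have hconj : ∀ ξ ∈ (ball_finite hsym hgen ((c:ℕ):ℝ)).toFinset,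
            ξ⁻¹ * (L.getD j 1) ∈ (ball_finite hsym hgen ((s:ℕ):ℝ)).toFinset := by
          intro ξ hξ
          rw [Set.Finite.mem_toFinset] at hξ ⊢
          have hξr : (wordLength S ξ : ℝ) ≤ ((c:ℕ):ℝ) := hξ
          have hξc : wordLength S ξ ≤ c := by exact_mod_cast hξr
          have hm1 : wordLength S (ξ⁻¹ * (L.getD j 1))
              ≤ wordLength S ξ⁻¹ + wordLength S (L.getD j 1) := wl_mul hsym hgen _ _
          have hm2 : wordLength S ξ⁻¹ ≤ wordLength S ξ := wl_inv hsym hgen ξ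
          have hfin2 : wordLength S (ξ⁻¹ * (L.getD j 1)) ≤ s := by omega
          show (wordLength S (ξ⁻¹ * (L.getD j 1)) : ℝ) ≤ ((s:ℕ):ℝ)
          exact_mod_cast hfin2
        have hcg := card_mul_g_le hf hp _ _ (L.getD j 1) hsub hconj
        have hcard : (((ball_finite hsym hgen ((c:ℕ):ℝ)).toFinset.card) : ℝ)
            = ((ballSet S ((c:ℕ):ℝ)).ncard : ℝ) := by
          rw [Set.ncard_eq_toFinset_card _ (ball_finite hsym hgen ((c:ℕ):ℝ))]
        rw [hcard, ← hEdef] at hcg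
        have hinv : (0:ℝ) ≤ (((ballSet S ((c:ℕ):ℝ)).ncard : ℝ))⁻¹ :=
          le_of_lt (inv_pos.2 hMc)
        have h3 := mul_le_mul_of_nonneg_left hcg hinv
        rw [inv_mul_cancel_left₀ (ne_of_gt hMc)] at h3
        calc gfun f p (L.getD j 1) ≤ _ := h3
          _ = (2:ℝ)^p * E * (((ballSet S ((c:ℕ):ℝ)).ncard : ℝ))⁻¹ := by ring
      have hsumle : ∑ j ∈ Finset.range K, gfun f p (L.getD j 1)
          ≤ (K:ℝ) * ((2:ℝ)^p * E * (((ballSet S ((c:ℕ):ℝ)).ncard : ℝ))⁻¹) := by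
        calc ∑ j ∈ Finset.range K, gfun f p (L.getD j 1)
            ≤ ∑ _j ∈ Finset.range K,
                (2:ℝ)^p * E * (((ballSet S ((c:ℕ):ℝ)).ncard : ℝ))⁻¹ :=
              Finset.sum_le_sum h2
          _ = (K:ℝ) * ((2:ℝ)^p * E * (((ballSet S ((c:ℕ):ℝ)).ncard : ℝ))⁻¹) := by
              rw [Finset.sum_const, Finset.card_range, nsmul_eq_mul]
      have hKpow : (K:ℝ)^(p-1) * (K:ℝ) = (K:ℝ)^p := by
        rw [← Real.rpow_add_one (ne_of_gt hKR) (p-1)]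
        norm_num
      calc gfun f p y
          ≤ (K:ℝ)^(p-1) * ∑ j ∈ Finset.range K, gfun f p (L.getD j 1) := h1
        _ ≤ (K:ℝ)^(p-1) * ((K:ℝ) * ((2:ℝ)^p * E * (((ballSet S ((c:ℕ):ℝ)).ncard : ℝ))⁻¹)) :=
            mul_le_mul_of_nonneg_left hsumle (Real.rpow_nonneg (le_of_lt hKR) _)
        _ = ((K:ℝ)^(p-1) * (K:ℝ)) * ((2:ℝ)^p * E * (((ballSet S ((c:ℕ):ℝ)).ncard : ℝ))⁻¹) := by
            ring
        _ = (2:ℝ)^p * (K:ℝ)^p * (((ballSet S ((c:ℕ):ℝ)).ncard : ℝ))⁻¹ * E := by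
            rw [hKpow]; ring
    have hcardBr : (((ball_finite hsym hgen ((r:ℕ):ℝ)).toFinset.card) : ℝ)
        = ((ballSet S ((r:ℕ):ℝ)).ncard : ℝ) := by
      rw [Set.ncard_eq_toFinset_card _ (ball_finite hsym hgen ((r:ℕ):ℝ))]
    have hsum2 : (∑ y ∈ (ball_finite hsym hgen ((r:ℕ):ℝ)).toFinset, gfun f p y)
        ≤ ((ballSet S ((r:ℕ):ℝ)).ncard : ℝ)
            * ((2:ℝ)^p * (K:ℝ)^p * (((ballSet S ((c:ℕ):ℝ)).ncard : ℝ))⁻¹ * E) := by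
      calc (∑ y ∈ (ball_finite hsym hgen ((r:ℕ):ℝ)).toFinset, gfun f p y)
          ≤ ∑ _y ∈ (ball_finite hsym hgen ((r:ℕ):ℝ)).toFinset,
              (2:ℝ)^p * (K:ℝ)^p * (((ballSet S ((c:ℕ):ℝ)).ncard : ℝ))⁻¹ * E :=
            Finset.sum_le_sum hbound
        _ = _ := by rw [Finset.sum_const, nsmul_eq_mul, hcardBr]
    have hNrinv : (0:ℝ) ≤ (((ballSet S ((r:ℕ):ℝ)).ncard : ℝ))⁻¹ := by positivity
    have h9 := mul_le_mul_of_nonneg_right hsum2 hNrinv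
    have h10 : (((ballSet S ((r:ℕ):ℝ)).ncard : ℝ)
        * ((2:ℝ)^p * (K:ℝ)^p * (((ballSet S ((c:ℕ):ℝ)).ncard : ℝ))⁻¹ * E))
          * (((ballSet S ((r:ℕ):ℝ)).ncard : ℝ))⁻¹
        = (2:ℝ)^p * (K:ℝ)^p * (((ballSet S ((c:ℕ):ℝ)).ncard : ℝ))⁻¹ * E := by
      rw [mul_comm (((ballSet S ((r:ℕ):ℝ)).ncard : ℝ)) _, mul_assoc,
        mul_inv_cancel₀ (ne_of_gt hNr), mul_one]
    rw [h10] at h9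
    exact h9
  by_cases hs3 : 3 ≤ s
  · -- large s : chunks of size s/3
    have hm1 : 1 ≤ s / 3 := by omega
    have hkey := key (s/3) (s/3) hm1 (by omega)
    set m : ℕ := s / 3 with hm
    set K : ℕ := r / m + 1 with hK
    have hK1 : 1 ≤ K := Nat.succ_le_succ (Nat.zero_le _)
    have hKR : (0:ℝ) < (K:ℝ) := by exact_mod_cast hK1
    have h9m : s ≤ 9 * m := by omega
    have hmR : (1:ℝ) ≤ ((m:ℕ):ℝ) := by exact_mod_cast hm1
    have hmpos : (0:ℝ) < ((m:ℕ):ℝ) := by linarith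
    have hq : ((r/m : ℕ):ℝ) ≤ (r:ℝ)/((m:ℕ):ℝ) := Nat.cast_div_le
    have hge1 : (1:ℝ) ≤ (r:ℝ)/((m:ℕ):ℝ) := by
      rw [le_div_iff₀ hmpos]
      have : ((m:ℕ):ℝ) ≤ ((r:ℕ):ℝ) := by exact_mod_cast (by omega : m ≤ r)
      linarith
    have hK2 : (K:ℝ) ≤ 2 * ((r:ℝ)/((m:ℕ):ℝ)) := by
      have : (K:ℝ) = ((r/m : ℕ):ℝ) + 1 := by rw [hK]; push_cast; ring
      rw [this]; linarith
    have hdiv : (r:ℝ)/((m:ℕ):ℝ) ≤ 9*(r:ℝ)/((s:ℕ):ℝ) := by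
      rw [div_le_div_iff₀ hmpos hsR]
      have h9mR : ((s:ℕ):ℝ) ≤ 9*((m:ℕ):ℝ) := by exact_mod_cast h9m
      nlinarith [le_of_lt hrR]
    have hK18 : (K:ℝ) ≤ 18 * ((r:ℝ)/((s:ℕ):ℝ)) := by
      have h18 : 18*((r:ℝ)/((s:ℕ):ℝ)) = 2*(9*(r:ℝ)/((s:ℕ):ℝ)) := by ring
      rw [h18]; linarith
    have hchain : ((ballSet S ((s:ℕ):ℝ)).ncard : ℝ)
        ≤ C_D^4 * ((ballSet S ((m:ℕ):ℝ)).ncard : ℝ) := by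
      have hs16 : ((s:ℕ):ℝ) ≤ 2*(2*(2*(2*((m:ℕ):ℝ)))) := by
        have h9mR : ((s:ℕ):ℝ) ≤ 9*((m:ℕ):ℝ) := by exact_mod_cast h9m
        linarith
      have h0 : ((ballSet S ((s:ℕ):ℝ)).ncard : ℝ) ≤ (((ballSet S (2*(2*(2*(2*((m:ℕ):ℝ)))))).ncard : ℝ)) := by
        exact_mod_cast hmono _ _ hs16
      have hd1 := hdoub (2*(2*(2*((m:ℕ):ℝ)))) (by linarith)
      have hd2 := hdoub (2*(2*((m:ℕ):ℝ))) (by linarith)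
      have hd3 := hdoub (2*((m:ℕ):ℝ)) (by linarith)
      have hd4 := hdoub (((m:ℕ):ℝ)) hmR
      calc ((ballSet S ((s:ℕ):ℝ)).ncard : ℝ) ≤ (((ballSet S (2*(2*(2*(2*((m:ℕ):ℝ)))))).ncard : ℝ)) := h0
        _ ≤ C_D * (((ballSet S (2*(2*(2*((m:ℕ):ℝ))))).ncard : ℝ)) := hd1
        _ ≤ C_D * (C_D * (((ballSet S (2*(2*((m:ℕ):ℝ)))).ncard : ℝ))) :=
            mul_le_mul_of_nonneg_left hd2 hCD0
        _ ≤ C_D * (C_D * (C_D * (((ballSet S (2*((m:ℕ):ℝ))).ncard : ℝ)))) :=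
            mul_le_mul_of_nonneg_left (mul_le_mul_of_nonneg_left hd3 hCD0) hCD0
        _ ≤ C_D * (C_D * (C_D * (C_D * (((ballSet S (((m:ℕ):ℝ))).ncard : ℝ))))) :=
            mul_le_mul_of_nonneg_left
              (mul_le_mul_of_nonneg_left (mul_le_mul_of_nonneg_left hd4 hCD0) hCD0) hCD0
        _ = C_D^4 * ((ballSet S ((m:ℕ):ℝ)).ncard : ℝ) := by ring
    have hMm : (0:ℝ) < ((ballSet S ((m:ℕ):ℝ)).ncard : ℝ) := by
      exact_mod_cast hposN _ (by positivity)
    have hKp18 : (K:ℝ)^p ≤ (18:ℝ)^p * ((r:ℝ)/((s:ℕ):ℝ))^p := by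
      calc (K:ℝ)^p ≤ (18 * ((r:ℝ)/((s:ℕ):ℝ)))^p :=
          Real.rpow_le_rpow (le_of_lt hKR) hK18 hp0
        _ = (18:ℝ)^p * ((r:ℝ)/((s:ℕ):ℝ))^p := Real.mul_rpow (by norm_num) hrsn
    have hMminv : (((ballSet S ((m:ℕ):ℝ)).ncard : ℝ))⁻¹
        ≤ C_D^4 * (((ballSet S ((s:ℕ):ℝ)).ncard : ℝ))⁻¹ := by
      have hdd := (div_le_div_iff₀ hMm hNs).2 (by rw [one_mul]; exact hchain)
      calc (((ballSet S ((m:ℕ):ℝ)).ncard : ℝ))⁻¹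
          = 1 / ((ballSet S ((m:ℕ):ℝ)).ncard : ℝ) := (one_div _).symm
        _ ≤ C_D^4 / ((ballSet S ((s:ℕ):ℝ)).ncard : ℝ) := hdd
        _ = C_D^4 * (((ballSet S ((s:ℕ):ℝ)).ncard : ℝ))⁻¹ := div_eq_mul_inv _ _
    have h36eq : (36:ℝ)^p = (2:ℝ)^p * (18:ℝ)^p := by
      rw [show (36:ℝ) = 2*18 by norm_num, Real.mul_rpow (by norm_num) (by norm_num)]
    have hcoef : (36:ℝ)^p * C_D^4 ≤ C := by rw [hCdef]; linarith
    have hXnn : (0:ℝ) ≤ ((r:ℝ)/((s:ℕ):ℝ))^p * (E * (((ballSet S ((s:ℕ):ℝ)).ncard : ℝ))⁻¹) := by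
      positivity
    calc (∑ y ∈ (ball_finite hsym hgen ((r:ℕ):ℝ)).toFinset, gfun f p y)
          * (((ballSet S ((r:ℕ):ℝ)).ncard : ℝ))⁻¹
        ≤ (2:ℝ)^p * (K:ℝ)^p * (((ballSet S ((m:ℕ):ℝ)).ncard : ℝ))⁻¹ * E := hkey
      _ ≤ (2:ℝ)^p * ((18:ℝ)^p * ((r:ℝ)/((s:ℕ):ℝ))^p)
            * (C_D^4 * (((ballSet S ((s:ℕ):ℝ)).ncard : ℝ))⁻¹) * E := by
          apply mul_le_mul_of_nonneg_right ?_ hE0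
          apply mul_le_mul
          · exact mul_le_mul_of_nonneg_left hKp18 (le_of_lt h2p)
          · exact hMminv
          · positivity
          · positivity
      _ = ((36:ℝ)^p * C_D^4)
            * (((r:ℝ)/((s:ℕ):ℝ))^p * (E * (((ballSet S ((s:ℕ):ℝ)).ncard : ℝ))⁻¹)) := by
          rw [h36eq]; ring
      _ ≤ C * (((r:ℝ)/((s:ℕ):ℝ))^p * (E * (((ballSet S ((s:ℕ):ℝ)).ncard : ℝ))⁻¹)) :=
          mul_le_mul_of_nonneg_right hcoef hXnn
      _ = C * ((r:ℝ)/((s:ℕ):ℝ))^p * (E * (((ballSet S ((s:ℕ):ℝ)).ncard : ℝ))⁻¹) := by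
          ring
  · -- small s : single generators, no averaging
    have hs2 : s ≤ 2 := by omega
    have hkey := key 1 0 le_rfl (by omega)
    have hball0 : ballSet S ((0:ℕ):ℝ) = {(1:G)} := by
      ext g
      simp only [ballSet, Set.mem_setOf_eq, Set.mem_singleton_iff, Nat.cast_zero]
      constructor
      · intro h
        have h0 : (wordLength S g : ℝ) = 0 := le_antisymm h (Nat.cast_nonneg _)
        exact eq_one_of_wl hsym hgen (by exact_mod_cast h0)
      · rintro rfl
        simp [wl_one]
    have hM0 : ((ballSet S ((0:ℕ):ℝ)).ncard : ℝ) = 1 := by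
      rw [hball0, Set.ncard_singleton]; norm_num
    rw [hM0, inv_one, mul_one] at hkey
    have hKr : ((r / 1 + 1 : ℕ):ℝ) = (r:ℝ) + 1 := by
      push_cast [Nat.div_one]; ring
    rw [hKr] at hkey
    have h4b : ((r:ℝ)+1) ≤ 4*((r:ℝ)/((s:ℕ):ℝ)) := by
      rw [show (4:ℝ)*((r:ℝ)/((s:ℕ):ℝ)) = (4*(r:ℝ))/((s:ℕ):ℝ) by ring, le_div_iff₀ hsR]
      have hsR2 : ((s:ℕ):ℝ) ≤ 2 := by exact_mod_cast hs2
      have hr2 : (2:ℝ) ≤ ((r:ℕ):ℝ) := by exact_mod_cast (by omega : 2 ≤ r)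
      nlinarith
    have hballone : ballSet S (1:ℝ) = (S : Set G) := by
      ext g
      simp only [ballSet, Set.mem_setOf_eq, Finset.mem_coe]
      constructor
      · intro h
        have h1 : wordLength S g ≤ 1 := by exact_mod_cast h
        obtain ⟨l, hl, e, pr⟩ := exists_word_length hsym hgen g
        rcases l with _ | ⟨x, l'⟩
        · have : g = 1 := by simpa using pr.symm
          rw [this]; exact hone
        · have hl' : l' = [] := by
            have : l'.length = 0 := by simp at e; omega
            exact List.length_eq_zero_iff.1 this
          subst hl'
          have : g = x := by simpa using pr.symm
          rw [this]; exact hl x (by simp)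
      · intro h
        have h1 : wordLength S ([g].prod) ≤ 1 := wl_le (by simpa using h)
        have h2 : wordLength S g ≤ 1 := by simpa using h1
        exact_mod_cast Nat.cast_le.2 h2
    have hNcard : ((ballSet S (1:ℝ)).ncard : ℝ) = (S.card : ℝ) := by
      rw [hballone, Set.ncard_coe_finset]
    have hNs2 : ((ballSet S ((s:ℕ):ℝ)).ncard : ℝ) ≤ C_D * (S.card : ℝ) := by
      have ha : ((ballSet S ((s:ℕ):ℝ)).ncard : ℝ) ≤ ((ballSet S (2*(1:ℝ))).ncard : ℝ) := by
        have hs21 : ((s:ℕ):ℝ) ≤ 2*(1:ℝ) := by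
          have : ((s:ℕ):ℝ) ≤ 2 := by exact_mod_cast hs2
          linarith
        exact_mod_cast hmono _ _ hs21
      calc ((ballSet S ((s:ℕ):ℝ)).ncard : ℝ) ≤ _ := ha
        _ ≤ C_D * ((ballSet S (1:ℝ)).ncard : ℝ) := hdoub 1 le_rfl
        _ = C_D * (S.card : ℝ) := by rw [hNcard]
    have hKp4 : ((r:ℝ)+1)^p ≤ (4:ℝ)^p * ((r:ℝ)/((s:ℕ):ℝ))^p := by
      calc ((r:ℝ)+1)^p ≤ (4*((r:ℝ)/((s:ℕ):ℝ)))^p :=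
          Real.rpow_le_rpow (by positivity) h4b hp0
        _ = (4:ℝ)^p * ((r:ℝ)/((s:ℕ):ℝ))^p := Real.mul_rpow (by norm_num) hrsn
    have h8eq : (8:ℝ)^p = (2:ℝ)^p * (4:ℝ)^p := by
      rw [show (8:ℝ) = 2*4 by norm_num, Real.mul_rpow (by norm_num) (by norm_num)]
    have h8C : (8:ℝ)^p ≤ C * (((ballSet S ((s:ℕ):ℝ)).ncard : ℝ))⁻¹ := by
      rw [show C * (((ballSet S ((s:ℕ):ℝ)).ncard : ℝ))⁻¹
          = C / ((ballSet S ((s:ℕ):ℝ)).ncard : ℝ) from (div_eq_mul_inv _ _).symm,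
        le_div_iff₀ hNs]
      have hstep : (8:ℝ)^p * ((ballSet S ((s:ℕ):ℝ)).ncard : ℝ) ≤ (8:ℝ)^p * (C_D * S.card) :=
        mul_le_mul_of_nonneg_left hNs2 (le_of_lt h8)
      rw [hCdef]
      nlinarith
    have hrp0 : (0:ℝ) ≤ ((r:ℝ)/((s:ℕ):ℝ))^p := Real.rpow_nonneg hrsn _
    calc (∑ y ∈ (ball_finite hsym hgen ((r:ℕ):ℝ)).toFinset, gfun f p y)
          * (((ballSet S ((r:ℕ):ℝ)).ncard : ℝ))⁻¹
        ≤ (2:ℝ)^p * ((r:ℝ)+1)^p * E := hkey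
      _ ≤ (2:ℝ)^p * ((4:ℝ)^p * ((r:ℝ)/((s:ℕ):ℝ))^p) * E := by
          apply mul_le_mul_of_nonneg_right ?_ hE0
          exact mul_le_mul_of_nonneg_left hKp4 (le_of_lt h2p)
      _ = (8:ℝ)^p * (((r:ℝ)/((s:ℕ):ℝ))^p * E) := by rw [h8eq]; ring
      _ ≤ (C * (((ballSet S ((s:ℕ):ℝ)).ncard : ℝ))⁻¹) * (((r:ℝ)/((s:ℕ):ℝ))^p * E) :=
          mul_le_mul_of_nonneg_right h8C (by positivity)
      _ = C * ((r:ℝ)/((s:ℕ):ℝ))^p * (E * (((ballSet S ((s:ℕ):ℝ)).ncard : ℝ))⁻¹) := by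
          ring
end
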